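/- arXiv:1810.03559 — 13 statements merged into one kernel-verified Lean document; each statement's English description precedes it below -/
import Mathlib

section
/- For sets X, Y ⊆ ℕ with X, Y both nonempty and both co-nonempty, F_X ≤_c F_Y if and only if X ≤_m Y or (complement of X) ≤_m Y. -/
/-- Computable reducibility between binary relations on ℕ: `R ≤_c S`. -/
def CRed (R S : ℕ → ℕ → Prop) : Prop :=
  ∃ f : ℕ → ℕ, Computable f ∧ ∀ x y, R x y ↔ S (f x) (f y)

/-- `R` has infinitely many equivalence classes. -/
def InfClasses (R : ℕ → ℕ → Prop) : Prop :=
  ∀ F : Finset ℕ, ∃ z, ∀ x ∈ F, ¬ R z x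

/-- `R` has an infinite computably enumerable transversal. -/
def HasCeTransversal (R : ℕ → ℕ → Prop) : Prop :=
  ∃ A : Set ℕ, A.Infinite ∧ REPred (· ∈ A) ∧ ∀ x ∈ A, ∀ y ∈ A, x ≠ y → ¬ R x y

/-- `R` is dark: infinitely many classes but no infinite c.e. transversal. -/
def Dark (R : ℕ → ℕ → Prop) : Prop := InfClasses R ∧ ¬ HasCeTransversal R

theorem FX_cRed_FY_iff (X Y : Set ℕ) (hX : X.Nonempty) (hXc : Xᶜ.Nonempty)
    (hY : Y.Nonempty) (hYc : Yᶜ.Nonempty) :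
    CRed (fun x y => x ∈ X ↔ y ∈ X) (fun x y => x ∈ Y ↔ y ∈ Y) ↔
      ManyOneReducible (· ∈ X) (· ∈ Y) ∨ ManyOneReducible (· ∈ Xᶜ) (· ∈ Y) := by
  constructor
  · rintro ⟨f, hf, hff⟩
    obtain ⟨a, ha⟩ := hX
    by_cases hfa : f a ∈ Y
    · left
      refine ⟨f, hf, fun x => ?_⟩
      have h := hff x a
      simp only at h
      tauto
    · right
      refine ⟨f, hf, fun x => ?_⟩
      have h := hff x a
      simp only [Set.mem_compl_iff] at h ⊢
      tauto
  · rintro (⟨f, hf, hff⟩ | ⟨f, hf, hff⟩)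
    · refine ⟨f, hf, fun x y => ?_⟩
      have h1 := hff x
      have h2 := hff y
      simp only at h1 h2 ⊢
      tauto
    · refine ⟨f, hf, fun x y => ?_⟩
      have h1 := hff x
      have h2 := hff y
      simp only [Set.mem_compl_iff] at h1 h2
      constructor
      · intro h
        by_cases hx : x ∈ X <;> by_cases hy : y ∈ X <;> tauto
      · intro h
        by_cases hx : x ∈ X <;> by_cases hy : y ∈ X <;>
          by_cases hfx : f x ∈ Y <;> tauto
end

section
/- (Inversion Lemma) Suppose R and S are equivalence relations on ℕ with S computably enumerable, and f is a computable reduction of R to S whose range intersects every S-equivalence class. Then S ≤_c R. -/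
open Nat.Partrec (Code)
open Nat.Partrec.Code

/-- Auxiliary: from a c.e. relation `S` and the surjectivity-onto-classes hypothesis,
extract a computable "inverse" `g` with `S (f (g y)) y` for all `y`. -/
theorem inv_aux (S : ℕ → ℕ → Prop)
    (hSce : REPred (fun p : ℕ × ℕ => S p.1 p.2))
    (f : ℕ → ℕ) (hf : Computable f)
    (honto : ∀ y, ∃ x, S (f x) y) :
    ∃ g : ℕ → ℕ, Computable g ∧ ∀ y, S (f (g y)) y := by
  -- partial function whose domain encodes S (f x) y at n = pair x y
  have hh : Partrec fun n : ℕ =>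
      (Part.assert (S (f n.unpair.1) n.unpair.2) fun _ => Part.some ()).map fun _ => 0 := by
    have hc : Computable fun n : ℕ => (f n.unpair.1, n.unpair.2) :=
      (hf.comp (Computable.fst.comp Computable.unpair)).pair
        (Computable.snd.comp Computable.unpair)
    exact (hSce.comp hc).map (Computable.const 0).to₂
  obtain ⟨c, hc⟩ := exists_code.1 (Partrec.nat_iff.1 hh)
  -- the search function
  set F : ℕ →. ℕ := fun y => Nat.rfindOpt fun n =>
    (evaln n.unpair.2 c (Nat.pair n.unpair.1 y)).map fun _ => n.unpair.1 with hF
  have hFp : Partrec F := by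
    apply Partrec.rfindOpt
    have h1 : Primrec₂ fun (y n : ℕ) => evaln n.unpair.2 c (Nat.pair n.unpair.1 y) := by
      have := primrec_evaln.comp
        (((((Primrec.snd.comp Primrec.unpair).comp Primrec.snd).pair
            (Primrec.const c)).pair
          (Primrec₂.natPair.comp ((Primrec.fst.comp Primrec.unpair).comp Primrec.snd)
            Primrec.fst)) : Primrec fun p : ℕ × ℕ =>
              ((p.2.unpair.2, c), Nat.pair p.2.unpair.1 p.1))
      exact this.to₂
    have h2 : Primrec₂ fun (y n : ℕ) =>
        (evaln n.unpair.2 c (Nat.pair n.unpair.1 y)).map fun _ => n.unpair.1 := by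
      exact (Primrec.option_map h1 (((Primrec.fst.comp Primrec.unpair).comp
        (Primrec.snd.comp Primrec.fst)).to₂)).to₂
    exact h2.to_comp
  have hmem : ∀ y x, x ∈ F y → S (f x) y := by
    intro y x hx
    obtain ⟨n, hn⟩ := Nat.rfindOpt_spec hx
    simp only [Option.mem_def, Option.map_eq_some_iff] at hn
    obtain ⟨a, ha, rfl⟩ := hn
    have := evaln_sound ha
    rw [hc] at this
    simp [Nat.unpair_pair] at this
    exact this.1
  have hdom : ∀ y, (F y).Dom := by
    intro y
    obtain ⟨x, hx⟩ := honto y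
    have : (0 : ℕ) ∈ eval c (Nat.pair x y) := by
      rw [hc]; simp [Nat.unpair_pair, hx]
    obtain ⟨k, hk⟩ := evaln_complete.1 this
    refine Nat.rfindOpt_dom.2 ⟨Nat.pair x k, x, ?_⟩
    simp only [Nat.unpair_pair, Option.mem_def, Option.map_eq_some_iff]
    exact ⟨0, hk, trivial⟩
  refine ⟨fun y => (F y).get (hdom y), hFp.of_eq_tot (fun y => Part.get_mem _), ?_⟩
  intro y
  exact hmem y _ (Part.get_mem _)

theorem inversion_lemma (R S : ℕ → ℕ → Prop) (hR : Equivalence R) (hS : Equivalence S)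
    (hSce : REPred (fun p : ℕ × ℕ => S p.1 p.2))
    (f : ℕ → ℕ) (hf : Computable f) (hred : ∀ x y, R x y ↔ S (f x) (f y))
    (honto : ∀ y, ∃ x, S (f x) y) :
    CRed S R := by
  obtain ⟨g, hg, hgS⟩ := inv_aux S hSce f hf honto
  refine ⟨g, hg, fun x y => ?_⟩
  rw [hred]
  constructor
  · intro h; exact hS.trans (hgS x) (hS.trans h (hS.symm (hgS y)))
  · intro h; exact hS.trans (hS.symm (hgS x)) (hS.trans h (hgS y))
end

section
/- Every co-computably-enumerable equivalence relation with infinitely many equivalence classes is light, i.e., there is no dark co-ceer: if R is an equivalence relation on ℕ whose complement (as a set of pairs) is computably enumerable and R has infinitely many equivalence classes, then Id ≤_c R. -/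
open Nat.Partrec.Code

theorem no_dark_coceer (R : ℕ → ℕ → Prop) (hR : Equivalence R)
    (hco : REPred (fun p : ℕ × ℕ => ¬ R p.1 p.2))
    (hinf : InfClasses R) :
    CRed Eq R := by
  obtain ⟨c, hc⟩ := exists_code.1 hco
  -- Stage-wise semidecision procedure for ¬R
  set E : ℕ → ℕ → ℕ → Bool := fun s z x => (evaln s c (Encodable.encode (z, x))).isSome with hE
  have hE_iff : ∀ z x, ¬ R z x ↔ ∃ s, E s z x = true := by
    intro z x
    have hdom : (eval c (Encodable.encode (z, x))).Dom ↔ ¬ R z x := by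
      rw [hc]; simp [Part.assert]
    rw [← hdom, Part.dom_iff_mem]
    constructor
    · rintro ⟨v, hv⟩
      obtain ⟨s, hs⟩ := evaln_complete.1 hv
      exact ⟨s, Option.isSome_iff_exists.2 ⟨v, Option.mem_def.1 hs⟩⟩
    · rintro ⟨s, hs⟩
      obtain ⟨v, hv⟩ := Option.isSome_iff_exists.1 hs
      exact ⟨v, evaln_sound (Option.mem_def.2 hv)⟩
  have hE_mono : ∀ {s s' z x}, s ≤ s' → E s z x = true → E s' z x = true := by
    intro s s' z x hss h
    obtain ⟨v, hv⟩ := Option.isSome_iff_exists.1 h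
    simpa [hE, Option.isSome_iff_exists] using
      ⟨v, Option.mem_def.1 (evaln_mono hss (Option.mem_def.2 hv))⟩
  set good : List ℕ → ℕ → Bool :=
    fun L k => L.foldr (fun x b => b && E k.unpair.1 k.unpair.2 x) true with hgood
  have hgood_iff : ∀ L k, good L k = true ↔ ∀ x ∈ L, E k.unpair.1 k.unpair.2 x = true := by
    intro L k
    induction L with
    | nil => simp [hgood]
    | cons a L ih => simp [hgood, Bool.and_eq_true] at ih ⊢; tauto
  have hgood_ex : ∀ L : List ℕ, ∃ k, good L k = true := by
    intro L
    obtain ⟨z, hz⟩ := hinf L.toFinset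
    have hz' : ∀ x ∈ L, ¬ R z x := fun x hx => hz x (List.mem_toFinset.2 hx)
    have key : ∀ M : List ℕ, (∀ x ∈ M, ¬ R z x) → ∃ s, ∀ x ∈ M, E s z x = true := by
      intro M
      induction M with
      | nil => exact fun _ => ⟨0, by simp⟩
      | cons a L ih =>
        intro hz'
        obtain ⟨s1, hs1⟩ := ih (fun x hx => hz' x (List.mem_cons_of_mem _ hx))
        obtain ⟨s0, hs0⟩ := (hE_iff z a).1 (hz' a List.mem_cons_self)
        refine ⟨max s0 s1, ?_⟩
        intro x hx
        rcases List.mem_cons.1 hx with rfl | hx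
        · exact hE_mono (le_max_left _ _) hs0
        · exact hE_mono (le_max_right _ _) (hs1 x hx)
    obtain ⟨s, hs⟩ := key L hz'
    refine ⟨Nat.pair s z, ?_⟩
    rw [hgood_iff]
    simpa using hs
  set ext : List ℕ → ℕ := fun L => (Nat.find (hgood_ex L)).unpair.2 with hextdef
  have hext : ∀ L, ∀ x ∈ L, ¬ R (ext L) x := by
    intro L x hx
    have h := (hgood_iff L _).1 (Nat.find_spec (hgood_ex L)) x hx
    exact (hE_iff _ _).2 ⟨_, h⟩
  set g : ℕ → List ℕ := fun n => Nat.rec [0] (fun _ IH => IH ++ [ext IH]) n with hgdef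
  have hgsucc : ∀ n, g (n + 1) = g n ++ [ext (g n)] := fun n => rfl
  set f : ℕ → ℕ := fun n => (g n).reverse.headI with hfdef
  have hf0 : f 0 = 0 := rfl
  have hfsucc : ∀ n, f (n + 1) = ext (g n) := by
    intro n; simp [hfdef, hgsucc]
  have hmem : ∀ n x, x ≤ n → f x ∈ g n := by
    intro n
    induction n with
    | zero => intro x hx; interval_cases x; simp [hf0, hgdef]
    | succ n ih =>
      intro x hx
      rcases Nat.lt_succ_iff_lt_or_eq.1 (Nat.lt_succ_of_le hx) with h | rfl
      · rw [hgsucc]; exact List.mem_append_left _ (ih x (Nat.lt_succ_iff.1 h))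
      · rw [hgsucc, hfsucc]; exact List.mem_append_right _ (List.mem_singleton_self _)
  have noR : ∀ x y, x < y → ¬ R (f y) (f x) := by
    intro x y hxy
    obtain ⟨m, rfl⟩ := Nat.exists_eq_add_of_lt hxy
    have : f (x + m + 1) = ext (g (x + m)) := hfsucc _
    rw [this]
    exact hext _ _ (hmem _ _ (Nat.le_add_right _ _))
  -- computability
  have hEval : Primrec fun p : (List ℕ × ℕ) × ℕ × Bool =>
      (evaln p.1.2.unpair.1 c (Encodable.encode (p.1.2.unpair.2, p.2.1))).isSome := by
    have h1 : Primrec fun p : (List ℕ × ℕ) × ℕ × Bool =>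
        ((p.1.2.unpair.1, c), Encodable.encode (p.1.2.unpair.2, p.2.1)) :=
      Primrec.pair
        (Primrec.pair (Primrec.fst.comp (Primrec.unpair.comp (Primrec.snd.comp Primrec.fst)))
          (Primrec.const c))
        (Primrec.encode.comp
          (Primrec.pair (Primrec.snd.comp (Primrec.unpair.comp (Primrec.snd.comp Primrec.fst)))
            (Primrec.fst.comp Primrec.snd)))
    exact Primrec.option_isSome.comp (primrec_evaln.comp h1)
  have hgood_prim : Primrec₂ good := by
    have := Primrec.list_foldr (α := List ℕ × ℕ) (β := ℕ) (σ := Bool)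
      (f := Prod.fst) (g := fun _ => true)
      (h := fun p q => q.2 && E p.2.unpair.1 p.2.unpair.2 q.1)
      Primrec.fst (Primrec.const true)
      ((Primrec₂.comp (Primrec.dom_bool₂ (· && ·)) (Primrec.snd.comp Primrec.snd) hEval))
    exact this
  have hext_comp : Computable ext := by
    have hpart : Partrec fun L =>
        (Nat.rfind (fun k => (Part.some (good L k)))).map fun k => k.unpair.2 :=
      Partrec.map (Partrec.rfind (hgood_prim.to_comp.partrec₂))
        ((Primrec.snd.comp (Primrec.unpair.comp Primrec.snd)).to_comp.to₂)
    refine Partrec.of_eq_tot hpart ?_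
    intro L
    rw [Part.mem_map_iff]
    refine ⟨Nat.find (hgood_ex L), ?_, rfl⟩
    refine Nat.mem_rfind.2 ?_
    constructor
    · simpa [Part.mem_some_iff] using (Nat.find_spec (hgood_ex L)).symm
    · intro m hm
      have := Nat.find_min (hgood_ex L) hm
      simp [Part.mem_some_iff]
      exact Bool.eq_false_iff.2 this
  have hg_comp : Computable g := by
    have := Computable.nat_rec (α := ℕ) (f := id) (g := fun _ => ([0] : List ℕ))
      (h := fun _ p => p.2 ++ [ext p.2])
      Computable.id (Computable.const [0])
      ((Computable.list_concat.comp (Computable.snd.comp Computable.snd)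
        (hext_comp.comp (Computable.snd.comp Computable.snd))).to₂)
    exact this
  have hf_comp : Computable f :=
    Primrec.list_headI.to_comp.comp (Primrec.list_reverse.to_comp.comp hg_comp)
  refine ⟨f, hf_comp, ?_⟩
  intro x y
  constructor
  · rintro rfl; exact hR.refl _
  · intro h
    by_contra hne
    rcases Nat.lt_or_ge x y with hlt | hge
    · exact noR x y hlt (hR.symm h)
    · exact noR y x (lt_of_le_of_ne hge (Ne.symm hne)) h
end

section
/- An equivalence relation R on ℕ with infinitely many classes is light if and only if R has an infinite computably enumerable transversal (an infinite c.e. set A such that any two distinct elements of A are R-inequivalent). -/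
/-- The range of a computable function is c.e. -/
lemma range_re {f : ℕ → ℕ} (hf : Computable f) : REPred (· ∈ Set.range f) := by
  have hpred : Computable₂ fun (a : ℕ) (n : ℕ) => decide (f n = a) :=
    Computable₂.mk <| Primrec.eq.decide.to_comp.comp (hf.comp Computable.snd) Computable.fst
  have hp : Partrec fun a : ℕ =>
      (Nat.rfind fun n => Part.some (decide (f n = a))).map fun _ => () := by
    exact Partrec.map (Partrec.rfind hpred.partrec₂) (Computable.const ()).to₂
  refine hp.of_eq fun a => Part.ext fun u => ?_
  cases u
  simp only [Part.mem_map_iff, Part.mem_assert_iff, Part.mem_some_iff]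
  constructor
  · rintro ⟨n, hn, -⟩
    have := Nat.rfind_spec hn
    have h' := of_decide_eq_true (Part.mem_some_iff.1 this).symm
    exact ⟨⟨n, h'⟩, trivial⟩
  · rintro ⟨⟨n, hn⟩, -⟩
    have hd : (decide (f n = a)) = true := by simp [hn]
    obtain ⟨m, hm, -⟩ := Nat.rfind_min' (p := fun n => decide (f n = a)) hd
    exact ⟨m, hm, trivial⟩

/-- A c.e. predicate on ℕ has a computable "Σ₁ witness" function. -/
lemma re_witness {p : ℕ → Prop} (hp : REPred p) :
    ∃ T : ℕ → Bool, Computable T ∧ ∀ a, (p a ↔ ∃ k, T (Nat.pair a k) = true) := by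
  have hnp : Nat.Partrec fun n =>
      (Part.assert (p n) fun _ => Part.some ()).map (fun u => Encodable.encode u) := by
    have h := hp
    unfold REPred at h
    simpa [Partrec] using h
  obtain ⟨c, hc⟩ := Nat.Partrec.Code.exists_code.1 hnp
  refine ⟨fun m => (Nat.Partrec.Code.evaln m.unpair.2 c m.unpair.1).isSome, ?_, ?_⟩
  · have : Primrec fun m : ℕ =>
        Nat.Partrec.Code.evaln m.unpair.2 c m.unpair.1 :=
      Nat.Partrec.Code.primrec_evaln.comp <|
        ((Primrec.snd.comp Primrec.unpair).pair (Primrec.const c)).pair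
          (Primrec.fst.comp Primrec.unpair)
    exact (Primrec.option_isSome.comp this).to_comp
  · intro a
    have hdom : p a ↔ (Nat.Partrec.Code.eval c a).Dom := by
      rw [hc]
      exact ⟨fun h => ⟨h, trivial⟩, fun h => h.1⟩
    rw [hdom, Part.dom_iff_mem]
    constructor
    · rintro ⟨x, hx⟩
      obtain ⟨k, hk⟩ := Nat.Partrec.Code.evaln_complete.1 hx
      refine ⟨k, ?_⟩
      simp only [Nat.unpair_pair, Option.isSome_iff_exists]
      exact ⟨x, hk⟩
    · rintro ⟨k, hk⟩
      simp only [Nat.unpair_pair, Option.isSome_iff_exists] at hk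
      obtain ⟨x, hx⟩ := hk
      exact ⟨x, Nat.Partrec.Code.evaln_complete.2 ⟨k, hx⟩⟩

theorem light_iff_ce_transversal (R : ℕ → ℕ → Prop) (hR : Equivalence R)
    (hinf : InfClasses R) :
    CRed Eq R ↔ HasCeTransversal R := by
  constructor
  · rintro ⟨f, hf, hfr⟩
    have hinj : Function.Injective f := by
      intro x y hxy
      exact (hfr x y).2 (hxy ▸ hR.refl (f x))
    refine ⟨Set.range f, Set.infinite_range_of_injective hinj, range_re hf, ?_⟩
    rintro x ⟨a, rfl⟩ y ⟨b, rfl⟩ hne hRxy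
    exact hne (congrArg f ((hfr a b).2 hRxy))
  · rintro ⟨A, hAinf, hAre, hAtr⟩
    obtain ⟨T, hT, hTspec⟩ := re_witness hAre
    have hex : ∀ a : ℕ, ∃ m, (T m && decide (a < m.unpair.1)) = true := by
      intro a
      obtain ⟨b, hbA, hab⟩ := hAinf.exists_gt a
      obtain ⟨k, hk⟩ := (hTspec b).1 hbA
      exact ⟨Nat.pair b k, by simp [hk, hab]⟩
    let g : ℕ → ℕ := fun a => (Nat.find (hex a)).unpair.1
    have hgspec : ∀ a, T (Nat.find (hex a)) = true ∧ a < g a := by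
      intro a
      have := Nat.find_spec (hex a)
      simpa [g] using this
    have hg_mem : ∀ a, g a ∈ A := by
      intro a
      refine (hTspec _).2 ⟨(Nat.find (hex a)).unpair.2, ?_⟩
      rw [Nat.pair_unpair]
      exact (hgspec a).1
    have hg_gt : ∀ a, a < g a := fun a => (hgspec a).2
    have hgc : Computable g := by
      have hpc : Computable₂ fun (a : ℕ) (m : ℕ) => (T m && decide (a < m.unpair.1)) := by
        have h1 : Computable fun q : ℕ × ℕ => T q.2 := hT.comp Computable.snd
        have h2 : Computable fun q : ℕ × ℕ => decide (q.1 < q.2.unpair.1) :=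
          Primrec.to_comp <| PrimrecPred.decide <| PrimrecRel.comp Primrec.nat_lt Primrec.fst
            (Primrec.fst.comp (Primrec.unpair.comp Primrec.snd))
        exact Computable₂.mk <| (Computable.cond h1 h2 (Computable.const false)).of_eq
          fun q => by cases hc : T q.2 <;> simp [hc]
      have hrf : Partrec fun a : ℕ =>
          (Nat.rfind fun m => Part.some (T m && decide (a < m.unpair.1))).map
            fun m => m.unpair.1 :=
        Partrec.map (Partrec.rfind hpc.partrec₂)
          ((Primrec.fst.comp (Primrec.unpair.comp Primrec.snd)).to_comp).to₂
      refine hrf.of_eq_tot fun a => ?_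
      refine (Part.mem_map_iff _).2 ⟨Nat.find (hex a), ?_, rfl⟩
      refine Nat.mem_rfind.2 ?_
      constructor
      · simpa using Nat.find_spec (hex a)
      · intro m hm
        have h := Nat.find_min (hex a) hm
        exact Part.mem_some_iff.2 (Bool.eq_false_iff.2 h).symm
    set f : ℕ → ℕ := fun n => Nat.rec (g 0) (fun _ ih => g ih) n with hfdef
    have hfc : Computable f :=
      Computable.nat_rec Computable.id (Computable.const (g 0))
        ((hgc.comp (Computable.snd.comp Computable.snd)).to₂)
    have hfmem : ∀ n, f n ∈ A := by
      intro n
      induction n with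
      | zero => exact hg_mem 0
      | succ n ih => exact hg_mem (f n)
    have hfmono : StrictMono f := by
      apply strictMono_nat_of_lt_succ
      intro n
      exact hg_gt (f n)
    refine ⟨f, hfc, fun x y => ?_⟩
    constructor
    · rintro rfl; exact hR.refl (f x)
    · intro h
      by_contra hne
      exact hAtr (f x) (hfmem x) (f y) (hfmem y)
        (fun he => hne (hfmono.injective he)) h
end

section
/- Let R be an equivalence relation on ℕ, let a, b be R-inequivalent with [b]_R a computable set. Then the collapse S := R_{col(a,b)} satisfies S ≤_c R, via the function sending x to x if x ∉ [b]_R and to a otherwise. -/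
/-- The collapse of `R` at `(x, y)`: merge the classes of `x` and `y`. -/
def Collapse (R : ℕ → ℕ → Prop) (x y : ℕ) : ℕ → ℕ → Prop :=
  fun u v => R u v ∨ ((R u x ∨ R u y) ∧ (R v x ∨ R v y))

open Classical in
theorem collapse_reduces (R : ℕ → ℕ → Prop) (hR : Equivalence R) (a b : ℕ)
    (hab : ¬ R a b) (hcomp : ComputablePred (fun x => R x b)) :
    ∃ f : ℕ → ℕ, Computable f ∧ (∀ x, f x = if R x b then a else x) ∧
      ∀ x y, Collapse R a b x y ↔ R (f x) (f y) := by
  obtain ⟨D, hc⟩ := hcomp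
  refine ⟨fun x => bif @decide (R x b) (D x) then a else x,
    Computable.cond hc (Computable.const a) Computable.id, ?_, ?_⟩
  · intro x
    by_cases h : R x b
    · simp [h]
    · simp [h]
  · intro x y
    have heq : ∀ z, (bif @decide (R z b) (D z) then a else z) = if R z b then a else z := by
      intro z; by_cases h : R z b <;> simp [h]
    simp only []
    rw [heq x, heq y]
    unfold Collapse
    by_cases hx : R x b <;> by_cases hy : R y b
    · rw [if_pos hx, if_pos hy]
      constructor
      · intro _; exact hR.refl a
      · intro _; exact Or.inl (hR.trans hx (hR.symm hy))
    · rw [if_pos hx, if_neg hy]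
      constructor
      · rintro (h | ⟨_, (h | h)⟩)
        · exact absurd (hR.trans (hR.symm h) hx) hy
        · exact hR.symm h
        · exact absurd h hy
      · intro h; exact Or.inr ⟨Or.inr hx, Or.inl (hR.symm h)⟩
    · rw [if_neg hx, if_pos hy]
      constructor
      · rintro (h | ⟨(h | h), _⟩)
        · exact absurd (hR.trans h hy) hx
        · exact h
        · exact absurd h hx
      · intro h; exact Or.inr ⟨Or.inl h, Or.inr hy⟩
    · rw [if_neg hx, if_neg hy]
      constructor
      · rintro (h | ⟨(h1 | h1), (h2 | h2)⟩)
        · exact h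
        · exact hR.trans h1 (hR.symm h2)
        · exact absurd h2 hy
        · exact absurd h1 hx
        · exact absurd h1 hx
      · exact Or.inl
end

section
/- Suppose R is a dark equivalence relation (no infinite c.e. transversal, infinitely many classes) having a computable equivalence class [b]_R with [b]_R ≠ [a]_R for some a. Then R is not finitely minimal: the collapse S = R_{col(a,b)} satisfies S <_c R and S has infinitely many classes. -/
theorem dark_with_computable_class_not_finitely_minimal
    (R : ℕ → ℕ → Prop) (hR : Equivalence R) (hdark : Dark R) (a b : ℕ)
    (hab : ¬ R a b) (hcomp : ComputablePred (fun x => R x b)) :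
    (CRed (Collapse R a b) R ∧ ¬ CRed R (Collapse R a b)) ∧
      InfClasses (Collapse R a b) := by
  obtain ⟨D, hD⟩ := hcomp
  -- the reduction Collapse R a b ≤c R
  set f : ℕ → ℕ := fun x => bif @decide (R x b) (D x) then a else x with hfdef
  have hfcomp : Computable f :=
    Computable.cond hD (Computable.const a) Computable.id
  have hfval : ∀ x, f x = if R x b then a else x := by
    intro x
    simp only [hfdef]
    by_cases hx : R x b <;> simp [hx]
  have hkey : ∀ x y, Collapse R a b x y ↔ R (f x) (f y) := by
    intro x y
    rw [hfval, hfval]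
    unfold Collapse
    by_cases hx : R x b <;> by_cases hy : R y b
    · rw [if_pos hx, if_pos hy]
      constructor
      · intro _; exact hR.refl a
      · intro _; exact Or.inr ⟨Or.inr hx, Or.inr hy⟩
    · rw [if_pos hx, if_neg hy]
      constructor
      · rintro (hxy | ⟨_, (hya | hyb)⟩)
        · exact absurd (hR.trans (hR.symm hxy) hx) hy
        · exact hR.symm hya
        · exact absurd hyb hy
      · intro hay; exact Or.inr ⟨Or.inr hx, Or.inl (hR.symm hay)⟩
    · rw [if_neg hx, if_pos hy]
      constructor
      · rintro (hxy | ⟨(hxa | hxb), _⟩)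
        · exact absurd (hR.trans hxy hy) hx
        · exact hxa
        · exact absurd hxb hx
      · intro hxa; exact Or.inr ⟨Or.inl hxa, Or.inr hy⟩
    · rw [if_neg hx, if_neg hy]
      constructor
      · rintro (hxy | ⟨(hxa | hxb), (hya | hyb)⟩)
        · exact hxy
        · exact hR.trans hxa (hR.symm hya)
        · exact absurd hyb hy
        · exact absurd hxb hx
        · exact absurd hxb hx
      · exact Or.inl
  refine ⟨⟨⟨f, hfcomp, hkey⟩, ?_⟩, ?_⟩
  · -- ¬ CRed R (Collapse R a b)
    rintro ⟨g, hg, hgr⟩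
    apply hdark.2
    set p : ℕ → ℕ := fun x => f (g x) with hpdef
    have hpcomp : Computable p := hfcomp.comp hg
    have hp : ∀ x y, R x y ↔ R (p x) (p y) := fun x y =>
      (hgr x y).trans (hkey (g x) (g y))
    have hpb : ∀ x, ¬ R (p x) b := by
      intro x
      simp only [hpdef, hfval]
      by_cases hgx : R (g x) b <;> simp [hgx, hab]
    set seq : ℕ → ℕ := fun n =>
      Nat.rec (motive := fun _ => ℕ) b (fun _ ih => p ih) n with hseqdef
    have hseq0 : seq 0 = b := rfl
    have hseqS : ∀ n, seq (n + 1) = p (seq n) := fun n => rfl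
    have hseqcomp : Computable seq := by
      have := Computable.nat_rec (f := fun n : ℕ => n) (g := fun _ : ℕ => b)
        (h := fun (_ : ℕ) (pr : ℕ × ℕ) => p pr.2) Computable.id (Computable.const b)
        (hpcomp.comp (Computable.snd.comp Computable.snd)).to₂
      exact this.of_eq fun n => rfl
    have hne : ∀ k d, ¬ R (seq k) (seq (k + d + 1)) := by
      intro k
      induction k with
      | zero =>
        intro d h
        rw [hseq0, Nat.zero_add, hseqS] at h
        exact hpb (seq d) (hR.symm h)
      | succ k ih =>
        intro d h
        rw [hseqS k, show k + 1 + d + 1 = (k + d + 1) + 1 from by omega, hseqS (k + d + 1)] at h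
        exact ih d ((hp (seq k) (seq (k + d + 1))).mpr h)
    have hneR : ∀ m n, m ≠ n → ¬ R (seq m) (seq n) := by
      intro m n hmn h
      rcases lt_or_gt_of_ne hmn with hlt | hlt
      · have := hne m (n - m - 1)
        rw [show m + (n - m - 1) + 1 = n by omega] at this
        exact this h
      · have := hne n (m - n - 1)
        rw [show n + (m - n - 1) + 1 = m by omega] at this
        exact this (hR.symm h)
    have hinj : Function.Injective seq := by
      intro m n h
      by_contra hmn
      exact hneR m n hmn (h ▸ hR.refl (seq m))
    refine ⟨Set.range seq, Set.infinite_range_of_injective hinj, ?_, ?_⟩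
    · -- c.e.-ness of the range
      have hF : Partrec fun x => Nat.rfind fun n => Part.some (decide (seq n = x)) := by
        apply Partrec.rfind
        exact Computable₂.partrec₂
          ((Primrec.eq.decide.to_comp).comp (hseqcomp.comp Computable.snd) Computable.fst)
      have := hF.dom_re
      apply this.of_eq
      intro x
      refine Nat.rfind_dom.trans ?_
      constructor
      · rintro ⟨n, hn, -⟩
        refine ⟨n, ?_⟩
        simpa using hn
      · rintro ⟨n, hn⟩
        exact ⟨n, by simpa using hn, fun {_} _ => trivial⟩
    · rintro x ⟨m, rfl⟩ y ⟨n, rfl⟩ hxy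
      exact hneR m n (fun h => hxy (by rw [h]))
  · -- Collapse has infinitely many classes
    intro F
    obtain ⟨z, hz⟩ := hdark.1 (insert a (insert b F))
    refine ⟨z, fun x hx => ?_⟩
    rintro (hzx | ⟨(hza | hzb), -⟩)
    · exact hz x (by simp [hx]) hzx
    · exact hz a (by simp) hza
    · exact hz b (by simp) hzb
end

section
/- If h : ℕ → ℕ is a computable reduction of an equivalence relation R to itself whose range misses the equivalence class of some element b (i.e., for all x, ¬(h(x) R b)), then the orbit {h^k(b) : k ∈ ℕ} consists of pairwise R-inequivalent elements, and hence R has an infinite c.e. transversal (so R is not dark). -/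
private lemma red_iter (R : ℕ → ℕ → Prop) (h : ℕ → ℕ)
    (hred : ∀ x y, R x y ↔ R (h x) (h y)) :
    ∀ k x y, R x y ↔ R (h^[k] x) (h^[k] y) := by
  intro k
  induction k with
  | zero => simp
  | succ n ih =>
    intro x y
    rw [ih x y, Function.iterate_succ_apply', Function.iterate_succ_apply',
      ← hred]

private lemma range_re_s10 {g : ℕ → ℕ} (hg : Computable g) :
    REPred (fun x => ∃ k, g k = x) := by
  have hp : Partrec fun x =>
      (Nat.rfind (fun k => Part.some (decide (g k = x)))).map (fun _ => ()) := by
    apply Partrec.map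
    · have hc : Computable fun p : ℕ × ℕ => decide (g p.2 = p.1) :=
        Primrec.eq.decide.to_comp.comp (hg.comp Computable.snd) Computable.fst
      exact Partrec.rfind hc.to₂.partrec₂
    · exact (Computable.const ()).to₂
  apply hp.of_eq
  intro x
  ext u
  simp only [Part.mem_map_iff, Part.mem_assert_iff, Part.mem_some_iff]
  constructor
  · rintro ⟨n, hn, -⟩
    have := Nat.rfind_spec hn
    simp only [Part.mem_some_iff, decide_eq_true_eq] at this
    exact ⟨⟨n, of_decide_eq_true this.symm⟩, trivial⟩
  · rintro ⟨⟨k, hk⟩, -⟩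
    have : decide (g k = x) = true := by simp [hk]
    obtain ⟨n, hn, -⟩ := Nat.rfind_min' (p := fun k => decide (g k = x)) this
    exact ⟨n, hn, trivial⟩

theorem orbit_transversal (R : ℕ → ℕ → Prop) (hR : Equivalence R)
    (h : ℕ → ℕ) (hcomp : Computable h) (hred : ∀ x y, R x y ↔ R (h x) (h y))
    (b : ℕ) (hmiss : ∀ x, ¬ R (h x) b) :
    (∀ k l : ℕ, k ≠ l → ¬ R (h^[k] b) (h^[l] b)) ∧ HasCeTransversal R := by
  have key : ∀ k l : ℕ, k < l → ¬ R (h^[k] b) (h^[l] b) := by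
    intro k l hkl hRkl
    have : R b (h^[l - k] b) := by
      rw [red_iter R h hred k b (h^[l-k] b), ← Function.iterate_add_apply]
      rwa [Nat.add_sub_cancel' hkl.le]
    obtain ⟨m, hm⟩ : ∃ m, l - k = m + 1 :=
      ⟨l - k - 1, by omega⟩
    rw [hm, Function.iterate_succ_apply'] at this
    exact hmiss _ (hR.symm this)
  have pairwise : ∀ k l : ℕ, k ≠ l → ¬ R (h^[k] b) (h^[l] b) := by
    intro k l hne
    rcases lt_or_gt_of_ne hne with hlt | hgt
    · exact key k l hlt
    · exact fun hr => key l k hgt (hR.symm hr)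
  refine ⟨pairwise, ?_⟩
  set g : ℕ → ℕ := fun k => h^[k] b with hg
  have hginj : Function.Injective g := by
    intro k l hkl
    by_contra hne
    exact pairwise k l hne (by rw [show h^[k] b = h^[l] b from hkl]; exact hR.refl _)
  have hgcomp : Computable g := by
    have : Computable fun k => Nat.rec (motive := fun _ => ℕ) b (fun _ ih => h ih) k :=
      Computable.nat_rec Computable.id (Computable.const b)
        ((hcomp.comp Computable.snd).comp Computable.snd).to₂
    apply this.of_eq
    intro k
    induction k with
    | zero => rfl
    | succ n ih =>
      show h (Nat.rec b (fun _ ih => h ih) n) = g (n + 1)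
      rw [ih]
      exact (Function.iterate_succ_apply' h n b).symm
  refine ⟨Set.range g, Set.infinite_range_of_injective hginj, ?_, ?_⟩
  · exact (range_re_s10 hgcomp).of_eq (fun x => by simp [Set.mem_range, eq_comm])
  · rintro x ⟨k, rfl⟩ y ⟨l, rfl⟩ hne
    exact pairwise k l (fun hkl => hne (by rw [hkl]))
end

section
/- Every dark equivalence relation R is self-full: every computable reduction f : R ≤_c R has range intersecting every R-equivalence class. -/
theorem dark_selffull (R : ℕ → ℕ → Prop) (hR : Equivalence R) (hdark : Dark R)
    (f : ℕ → ℕ) (hf : Computable f) (hred : ∀ x y, R x y ↔ R (f x) (f y)) :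
    ∀ y, ∃ x, R (f x) y := by
  intro y
  by_contra hy
  push_neg at hy
  set g : ℕ → ℕ := fun n => f^[n] y with hg
  -- cancellation
  have cancel : ∀ k a b, R (f^[k] a) (f^[k] b) → R a b := by
    intro k
    induction k with
    | zero => intro a b h; simpa using h
    | succ k ih =>
      intro a b h
      rw [Function.iterate_succ_apply', Function.iterate_succ_apply'] at h
      exact ih a b ((hred _ _).2 h)
  -- pairwise inequivalence
  have pair : ∀ m n, m < n → ¬ R (g m) (g n) := by
    intro m n hmn hRmn
    have hn : g n = f^[m] (g (n - m)) := by
      simp only [hg, ← Function.iterate_add_apply]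
      congr 1; omega
    rw [hn] at hRmn
    have h1 : R y (g (n - m)) := cancel m _ _ hRmn
    obtain ⟨d, hd⟩ : ∃ d, n - m = d + 1 := ⟨n - m - 1, by omega⟩
    rw [hd] at h1
    have : g (d + 1) = f (g d) := by
      simp [hg, Function.iterate_succ_apply']
    rw [this] at h1
    exact hy (g d) (hR.symm h1)
  have ginj : Function.Injective g := by
    intro m n hmngn
    by_contra hne
    rcases Nat.lt_or_ge m n with h | h
    · exact pair m n h (by rw [hmngn]; exact hR.refl _)
    · exact pair n m (by omega) (by rw [hmngn]; exact hR.refl _)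
  -- g is computable
  have hgc : Computable g := by
    have := Computable.nat_rec Computable.id (Computable.const y)
      ((hf.comp (Computable.snd.comp Computable.snd)).to₂)
    refine this.of_eq fun n => ?_
    induction n with
    | zero => rfl
    | succ n ih =>
      simp only [id] at ih ⊢
      rw [show g (n+1) = f (g n) from Function.iterate_succ_apply' f n y, ← ih]
  apply hdark.2
  refine ⟨Set.range g, Set.infinite_range_of_injective ginj, ?_, ?_⟩
  · -- c.e.
    have hc2 : Computable₂ fun (a n : ℕ) => decide (g n = a) :=
      (Primrec.eq.decide.to_comp.comp (hgc.comp Computable.snd) Computable.fst).to₂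
    have hpc := Partrec.rfind hc2.partrec₂
    have := hpc.dom_re
    refine this.of_eq fun a => ?_
    rw [Nat.rfind_dom]
    constructor
    · rintro ⟨n, h1, -⟩
      exact ⟨n, by simpa using h1⟩
    · rintro ⟨n, hn⟩
      exact ⟨n, by simpa using hn, fun _ => trivial⟩
  · rintro x ⟨m, rfl⟩ z ⟨n, rfl⟩ hne hRmn
    rcases Nat.lt_or_ge m n with h | h
    · exact pair m n h hRmn
    · exact pair n m (lt_of_le_of_ne h fun e => hne (congrArg g e.symm))
        (hR.symm hRmn)
end

section
/- If R is a self-full equivalence relation, then R <_c R ⊕ Id₁, where R ⊕ Id₁ is the relation on ℕ with (2x)(R⊕Id₁)(2y) ↔ x R y, all odd numbers mutually equivalent, and no even number equivalent to an odd number. -/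
/-- `R ⊕ Id₁`: a copy of `R` on the even numbers, plus one fresh class (the odds). -/
def PlusOne (R : ℕ → ℕ → Prop) : ℕ → ℕ → Prop :=
  fun x y => (∃ a b, x = 2 * a ∧ y = 2 * b ∧ R a b) ∨ (Odd x ∧ Odd y)

theorem selffull_lt_plusOne (R : ℕ → ℕ → Prop) (hR : Equivalence R)
    (hsf : ∀ f : ℕ → ℕ, Computable f → (∀ x y, R x y ↔ R (f x) (f y)) →
      ∀ y, ∃ x, R (f x) y) :
    CRed R (PlusOne R) ∧ ¬ CRed (PlusOne R) R := by
  have hdbl : Computable (fun x : ℕ => 2 * x) :=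
    Primrec.to_comp (Primrec.nat_mul.comp (Primrec.const 2) Primrec.id)
  constructor
  · refine ⟨fun x => 2 * x, hdbl, fun x y => ?_⟩
    show R x y ↔ PlusOne R (2 * x) (2 * y)
    constructor
    · intro h; exact Or.inl ⟨x, y, rfl, rfl, h⟩
    · rintro (⟨a, b, ha, hb, h⟩ | ⟨h, _⟩)
      · have hxa : x = a := by omega
        have hyb : y = b := by omega
        rw [hxa, hyb]; exact h
      · exact absurd h (by simp [Nat.odd_iff])
  · rintro ⟨g, hg, hiff⟩
    have hf : ∀ x y, R x y ↔ R (g (2 * x)) (g (2 * y)) := by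
      intro x y
      rw [← hiff]
      constructor
      · intro h; exact Or.inl ⟨x, y, rfl, rfl, h⟩
      · rintro (⟨a, b, ha, hb, h⟩ | ⟨h, _⟩)
        · have hxa : x = a := by omega
          have hyb : y = b := by omega
          rw [hxa, hyb]; exact h
        · exact absurd h (by simp [Nat.odd_iff])
    obtain ⟨x, hx⟩ := hsf (fun x => g (2 * x)) (hg.comp hdbl) hf (g 1)
    have : PlusOne R (2 * x) 1 := (hiff (2 * x) 1).mpr hx
    rcases this with ⟨a, b, _, hb, _⟩ | ⟨h, _⟩
    · omega
    · exact absurd h (by simp [Nat.odd_iff])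
end

section
/- For any equivalence relation R on ℕ and any z such that [z]_R is not a singleton, R ⊕ Id₁ ≡_c R_{[z]}, where R_{[z]} is obtained from R by splitting z off its class: x R_{[z]} y ↔ x = y ∨ (x R y ∧ z ∉ {x,y}). -/
/-- replace `z` by `y₀` -/
def gAux (z y₀ a : ℕ) : ℕ := if a = z then y₀ else a

/-- reduction for the forward direction -/
def fAux (z y₀ x : ℕ) : ℕ := if x % 2 = 1 then z else gAux z y₀ (x / 2)

/-- reduction for the backward direction -/
def hAux (z x : ℕ) : ℕ := if x = z then 1 else 2 * x

lemma gAux_ne (z y₀ : ℕ) (h : y₀ ≠ z) (a : ℕ) : gAux z y₀ a ≠ z := by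
  unfold gAux; split <;> simp_all

lemma fAux_even (z y₀ a : ℕ) : fAux z y₀ (2 * a) = gAux z y₀ a := by
  unfold fAux
  have h1 : 2 * a % 2 = 0 := by omega
  have h2 : 2 * a / 2 = a := by omega
  rw [h1, h2]; rfl

lemma fAux_odd (z y₀ x : ℕ) (h : Odd x) : fAux z y₀ x = z := by
  unfold fAux
  rw [if_pos (Nat.odd_iff.mp h)]

lemma fAux_comp (z y₀ : ℕ) : Computable (fAux z y₀) := by
  apply Primrec.to_comp
  unfold fAux gAux
  apply Primrec.ite
  · exact PrimrecRel.comp Primrec.eq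
      (Primrec₂.comp Primrec.nat_mod Primrec.id (Primrec.const 2)) (Primrec.const 1)
  · exact Primrec.const z
  · apply Primrec.ite
    · exact PrimrecRel.comp Primrec.eq
        (Primrec₂.comp Primrec.nat_div Primrec.id (Primrec.const 2)) (Primrec.const z)
    · exact Primrec.const y₀
    · exact Primrec₂.comp Primrec.nat_div Primrec.id (Primrec.const 2)

lemma hAux_comp (z : ℕ) : Computable (hAux z) := by
  apply Primrec.to_comp
  unfold hAux
  apply Primrec.ite
  · exact PrimrecRel.comp Primrec.eq Primrec.id (Primrec.const z)
  · exact Primrec.const 1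
  · exact Primrec₂.comp Primrec.nat_mul (Primrec.const 2) Primrec.id

theorem plusOne_equiv_split (R : ℕ → ℕ → Prop) (hR : Equivalence R) (z : ℕ)
    (hz : ∃ y, y ≠ z ∧ R y z) :
    CRed (PlusOne R) (fun x y => x = y ∨ (R x y ∧ z ≠ x ∧ z ≠ y)) ∧
    CRed (fun x y => x = y ∨ (R x y ∧ z ≠ x ∧ z ≠ y)) (PlusOne R) := by
  obtain ⟨y₀, hy₀ne, hy₀R⟩ := hz
  have hgR : ∀ a : ℕ, R (gAux z y₀ a) a := by
    intro a; unfold gAux; split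
    · subst a; exact hy₀R
    · exact hR.refl a
  constructor
  · refine ⟨fAux z y₀, fAux_comp z y₀, ?_⟩
    intro x y
    rcases Nat.even_or_odd x with hx | hx <;> rcases Nat.even_or_odd y with hy | hy
    · obtain ⟨a, rfl⟩ := hx; obtain ⟨b, rfl⟩ := hy
      have hx2 : a + a = 2 * a := by ring
      have hy2 : b + b = 2 * b := by ring
      rw [hx2, hy2, fAux_even, fAux_even]
      constructor
      · rintro (⟨c, d, hc, hd, hcd⟩ | ⟨ho, _⟩)
        · have hac : a = c := by omega
          have hbd : b = d := by omega
          subst hac; subst hbd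
          exact Or.inr ⟨hR.trans (hgR a) (hR.trans hcd (hR.symm (hgR b))),
            fun h => gAux_ne z y₀ hy₀ne a h.symm, fun h => gAux_ne z y₀ hy₀ne b h.symm⟩
        · exact absurd ho (by rw [Nat.odd_iff]; omega)
      · rintro (h | ⟨h, _, _⟩)
        · exact Or.inl ⟨a, b, rfl, rfl, hR.trans (hR.symm (hgR a)) (h ▸ hgR b)⟩
        · exact Or.inl ⟨a, b, rfl, rfl, hR.trans (hR.symm (hgR a)) (hR.trans h (hgR b))⟩
    · obtain ⟨a, rfl⟩ := hx
      have hx2 : a + a = 2 * a := by ring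
      rw [hx2, fAux_even, fAux_odd z y₀ y hy]
      constructor
      · rintro (⟨c, d, hc, hd, hcd⟩ | ⟨ho, _⟩)
        · exact absurd hd (by rw [Nat.odd_iff] at hy; omega)
        · exact absurd ho (by rw [Nat.odd_iff]; omega)
      · rintro (h | ⟨_, _, h⟩)
        · exact absurd h (gAux_ne z y₀ hy₀ne a)
        · exact absurd rfl h
    · obtain ⟨b, rfl⟩ := hy
      have hy2 : b + b = 2 * b := by ring
      rw [hy2, fAux_even, fAux_odd z y₀ x hx]
      constructor
      · rintro (⟨c, d, hc, hd, hcd⟩ | ⟨_, ho⟩)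
        · exact absurd hc (by rw [Nat.odd_iff] at hx; omega)
        · exact absurd ho (by rw [Nat.odd_iff]; omega)
      · rintro (h | ⟨_, h, _⟩)
        · exact absurd h.symm (gAux_ne z y₀ hy₀ne b)
        · exact absurd rfl h
    · rw [fAux_odd z y₀ x hx, fAux_odd z y₀ y hy]
      exact ⟨fun _ => Or.inl rfl, fun _ => Or.inr ⟨hx, hy⟩⟩
  · refine ⟨hAux z, hAux_comp z, ?_⟩
    intro x y
    unfold hAux
    by_cases hx : x = z <;> by_cases hy : y = z
    · rw [if_pos hx, if_pos hy]
      exact ⟨fun _ => Or.inr ⟨odd_one, odd_one⟩, fun _ => Or.inl (hx.trans hy.symm)⟩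
    · rw [if_pos hx, if_neg hy]
      subst hx
      constructor
      · rintro (h | ⟨_, h, _⟩)
        · exact absurd h.symm hy
        · exact absurd rfl h
      · rintro (⟨a, b, ha, _, _⟩ | ⟨_, ho⟩)
        · omega
        · exact absurd ho (by rw [Nat.odd_iff]; omega)
    · rw [if_pos hy, if_neg hx]
      subst hy
      constructor
      · rintro (h | ⟨_, _, h⟩)
        · exact absurd h hx
        · exact absurd rfl h
      · rintro (⟨a, b, _, hb, _⟩ | ⟨ho, _⟩)
        · omega
        · exact absurd ho (by rw [Nat.odd_iff]; omega)
    · rw [if_neg hx, if_neg hy]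
      constructor
      · rintro (h | ⟨h, _, _⟩)
        · subst h; exact Or.inl ⟨x, x, rfl, rfl, hR.refl x⟩
        · exact Or.inl ⟨x, y, rfl, rfl, h⟩
      · rintro (⟨a, b, ha, hb, hab⟩ | ⟨ho, _⟩)
        · have h1 : x = a := by omega
          have h2 : y = b := by omega
          subst h1; subst h2
          exact Or.inr ⟨hab, Ne.symm hx, Ne.symm hy⟩
        · exact absurd ho (by rw [Nat.odd_iff]; omega)
end

section
/- Let R, S be equivalence relations on ℕ with infinitely many classes. If R is not S-dark (i.e., R has an infinite S-computably-enumerable transversal), then S ≤_{deg_T(S)} R, i.e., there is an S-computable function f with x S y ↔ f(x) R f(y). -/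
/-- Partial functions on ℕ computable relative to an oracle `O : ℕ → ℕ`. -/
inductive RecIn (O : ℕ → ℕ) : (ℕ →. ℕ) → Prop
  | oracle : RecIn O (O : ℕ →. ℕ)
  | zero : RecIn O (pure 0)
  | succ : RecIn O ↑Nat.succ
  | left : RecIn O ↑fun n : ℕ => n.unpair.1
  | right : RecIn O ↑fun n : ℕ => n.unpair.2
  | pair {f g} : RecIn O f → RecIn O g → RecIn O fun n => Nat.pair <$> f n <*> g n
  | comp {f g} : RecIn O f → RecIn O g → RecIn O fun n => g n >>= f
  | prec {f g} : RecIn O f → RecIn O g → RecIn O (Nat.unpaired fun a n =>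
      n.rec (f a) fun y IH => do let i ← IH; g (Nat.pair a (Nat.pair y i)))
  | rfind {f} : RecIn O f → RecIn O fun a =>
      Nat.rfind fun n => (fun m => m = 0) <$> f (Nat.pair a n)

open Classical in
/-- The characteristic function (on codes of pairs) of a binary relation on ℕ. -/
noncomputable def chi (R : ℕ → ℕ → Prop) : ℕ → ℕ :=
  fun n => if R n.unpair.1 n.unpair.2 then 1 else 0

/-- `A` is c.e. relative to the oracle `O`. -/
def CeIn (O : ℕ → ℕ) (A : Set ℕ) : Prop :=
  ∃ f : ℕ →. ℕ, RecIn O f ∧ ∀ n, A n ↔ (f n).Dom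

/-- `R` is `O`-dark: infinitely many classes but no infinite `O`-c.e. transversal. -/
def DarkIn (O : ℕ → ℕ) (R : ℕ → ℕ → Prop) : Prop :=
  InfClasses R ∧ ¬ ∃ A : Set ℕ, A.Infinite ∧ CeIn O A ∧
    ∀ x ∈ A, ∀ y ∈ A, x ≠ y → ¬ R x y

/-- `R` and `S` are mutually dark. -/
def MutuallyDark (R S : ℕ → ℕ → Prop) : Prop :=
  DarkIn (chi S) R ∧ DarkIn (chi R) S

namespace RecIn

theorem of_eq {O : ℕ → ℕ} {f g : ℕ →. ℕ} (h : RecIn O f) (e : ∀ n, f n = g n) : RecIn O g :=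
  (funext e : f = g) ▸ h

theorem of_partrec {O : ℕ → ℕ} {f : ℕ →. ℕ} (h : Nat.Partrec f) : RecIn O f := by
  induction h with
  | zero => exact RecIn.zero
  | succ => exact RecIn.succ
  | left => exact RecIn.left
  | right => exact RecIn.right
  | pair _ _ ihf ihg => exact RecIn.pair ihf ihg
  | comp _ _ ihf ihg => exact RecIn.comp ihf ihg
  | prec _ _ ihf ihg => exact RecIn.prec ihf ihg
  | rfind _ ihf => exact RecIn.rfind ihf

theorem of_computable {O : ℕ → ℕ} {f : ℕ → ℕ} (h : Computable f) : RecIn O ↑f :=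
  of_partrec (Partrec.nat_iff.1 h)

theorem totalComp {O : ℕ → ℕ} {f : ℕ →. ℕ} {g : ℕ → ℕ} (hf : RecIn O f) (hg : RecIn O ↑g) :
    RecIn O (fun n => f (g n)) :=
  (RecIn.comp hf hg).of_eq fun n => by simp [PFun.coe_val]; exact Part.bind_some _ _

theorem totalComp' {O : ℕ → ℕ} {f g : ℕ → ℕ} (hf : RecIn O ↑f) (hg : RecIn O ↑g) :
    RecIn O ↑(fun n => f (g n)) :=
  (totalComp hf hg).of_eq fun n => by simp [PFun.coe_val]

theorem totalPair {O : ℕ → ℕ} {f g : ℕ → ℕ} (hf : RecIn O ↑f) (hg : RecIn O ↑g) :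
    RecIn O ↑(fun n => Nat.pair (f n) (g n)) :=
  (RecIn.pair hf hg).of_eq fun n => by simp [PFun.coe_val, Seq.seq]

theorem oracleTotal (O : ℕ → ℕ) : RecIn O ↑O := RecIn.oracle

end RecIn

theorem RecIn.totalPrec {O : ℕ → ℕ} {base step : ℕ → ℕ} (hb : RecIn O ↑base) (hs : RecIn O ↑step) :
    RecIn O ↑(fun p : ℕ => Nat.rec (motive := fun _ => ℕ) (base p.unpair.1)
      (fun y IH => step (Nat.pair p.unpair.1 (Nat.pair y IH))) p.unpair.2) := by
  apply (RecIn.prec hb hs).of_eq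
  intro n
  simp only [Nat.unpaired, PFun.coe_val]
  induction n.unpair.2 with
  | zero => rfl
  | succ k ih =>
    have e : (Nat.rec (Part.some (base (Nat.unpair n).1))
        (fun y IH => do let i ← IH; Part.some (step (Nat.pair (Nat.unpair n).1 (Nat.pair y i))))
        (k+1) : Part ℕ) = (Nat.rec (Part.some (base (Nat.unpair n).1))
        (fun y IH => do let i ← IH; Part.some (step (Nat.pair (Nat.unpair n).1 (Nat.pair y i))))
        k : Part ℕ).bind (fun i => Part.some (step (Nat.pair (Nat.unpair n).1 (Nat.pair k i)))) := rfl
    rw [e, ih, Part.bind_some]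

def OPref (O : ℕ → ℕ) (k : ℕ) : List ℕ := (List.range k).map O

theorem OPref_prefix (O : ℕ → ℕ) {k k' : ℕ} (h : k ≤ k') : OPref O k <+: OPref O k' := by
  have e : OPref O k = (OPref O k').take k := by
    simp [OPref, ← List.map_take, List.take_range, Nat.min_eq_left h]
  rw [e]; exact List.take_prefix _ _

theorem OPref_getElem? (O : ℕ → ℕ) {k n : ℕ} (h : n < k) : (OPref O k)[n]? = some (O n) := by
  simp [OPref, List.getElem?_map, List.getElem?_range h]


theorem mem_natPairSeq {a b : Part ℕ} {v : ℕ} :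
    v ∈ (Nat.pair <$> a <*> b) ↔ ∃ x ∈ a, ∃ y ∈ b, v = Nat.pair x y := by
  simp [Seq.seq, Part.mem_map_iff, Part.mem_bind_iff]
  constructor
  · rintro ⟨x, hx, y, hy, rfl⟩; exact ⟨x, hx, y, hy, rfl⟩
  · rintro ⟨x, hx, y, hy, rfl⟩; exact ⟨x, hx, y, hy, rfl⟩
theorem mem_pfun_bind {a : Part ℕ} {f : ℕ →. ℕ} {v : ℕ} :
    v ∈ (a >>= f) ↔ ∃ x ∈ a, v ∈ f x := Part.mem_bind_iff

open Encodable in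
theorem RecIn.exists_approx {O : ℕ → ℕ} {g : ℕ →. ℕ} (hg : RecIn O g) :
    ∃ G : ℕ →. ℕ, Nat.Partrec G ∧
      (∀ (σ σ' : List ℕ), σ <+: σ' → ∀ n v,
        v ∈ G (Nat.pair (encode σ) n) → v ∈ G (Nat.pair (encode σ') n)) ∧
      (∀ k n v, v ∈ G (Nat.pair (encode (OPref O k)) n) → v ∈ g n) ∧
      (∀ n v, v ∈ g n → ∃ k, v ∈ G (Nat.pair (encode (OPref O k)) n)) := by
  have pu1 : Primrec fun p : ℕ => p.unpair.1 := Primrec.fst.comp Primrec.unpair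
  have pu2 : Primrec fun p : ℕ => p.unpair.2 := Primrec.snd.comp Primrec.unpair
  induction hg with
  | oracle =>
    refine ⟨fun p => Part.ofOption ((decode (α := List ℕ) p.unpair.1).bind
        fun l => l[p.unpair.2]?), ?_, ?_, ?_, ?_⟩
    · apply Partrec.nat_iff.1
      exact Computable.ofOption
        ((Computable.decode.comp pu1.to_comp).option_bind
          ((Primrec.list_getElem?.comp Primrec.snd (pu2.comp Primrec.fst)).to_comp.to₂))
    · intro σ σ' pre n v hv
      simp only [Part.mem_ofOption, Option.mem_def, Nat.unpair_pair, encodek, Option.bind_some]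
        at hv ⊢
      obtain ⟨t, rfl⟩ := pre
      have hlt : n < σ.length := (List.getElem?_eq_some_iff.1 hv).1
      rwa [List.getElem?_append_left hlt]
    · intro k n v hv
      simp only [Part.mem_ofOption, Option.mem_def, Nat.unpair_pair, encodek, Option.bind_some]
        at hv
      have hlt : n < k := by
        have := (List.getElem?_eq_some_iff.1 hv).1
        simpa [OPref] using this
      rw [OPref_getElem? O hlt] at hv
      simp only [Option.some_inj] at hv
      simp [PFun.coe_val, Part.mem_some_iff, hv]
    · intro n v hv
      refine ⟨n + 1, ?_⟩
      simp only [PFun.coe_val, Part.mem_some_iff] at hv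
      simp [Part.mem_ofOption, Nat.unpair_pair, encodek, OPref_getElem? O (Nat.lt_succ_self n), hv]
  | zero =>
    exact ⟨pure 0, Nat.Partrec.zero, fun σ σ' _ n v h => h, fun k n v h => h, fun n v h => ⟨0, h⟩⟩
  | succ =>
    refine ⟨↑(fun p : ℕ => Nat.succ p.unpair.2), Partrec.nat_iff.1 (Primrec.succ.comp pu2).to_comp,
      ?_, ?_, ?_⟩
    · intro σ σ' _ n v h; simpa [PFun.coe_val] using h
    · intro k n v h; simpa [PFun.coe_val] using h
    · intro n v h; exact ⟨0, by simpa [PFun.coe_val] using h⟩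
  | left =>
    refine ⟨↑(fun p : ℕ => p.unpair.2.unpair.1),
      Partrec.nat_iff.1 (pu1.comp pu2).to_comp, ?_, ?_, ?_⟩
    · intro σ σ' _ n v h; simpa [PFun.coe_val] using h
    · intro k n v h; simpa [PFun.coe_val] using h
    · intro n v h; exact ⟨0, by simpa [PFun.coe_val] using h⟩
  | right =>
    refine ⟨↑(fun p : ℕ => p.unpair.2.unpair.2),
      Partrec.nat_iff.1 (pu2.comp pu2).to_comp, ?_, ?_, ?_⟩
    · intro σ σ' _ n v h; simpa [PFun.coe_val] using h
    · intro k n v h; simpa [PFun.coe_val] using h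
    · intro n v h; exact ⟨0, by simpa [PFun.coe_val] using h⟩
  | pair hf' hg' ihf ihg =>
    obtain ⟨Gf, pf, monof, soundf, complf⟩ := ihf
    obtain ⟨Gg, pg, monog, soundg, complg⟩ := ihg
    refine ⟨fun p => Nat.pair <$> Gf p <*> Gg p, Nat.Partrec.pair pf pg, ?_, ?_, ?_⟩
    · intro σ σ' pre n v hv
      rw [mem_natPairSeq] at hv ⊢
      obtain ⟨x, hx, y, hy, rfl⟩ := hv
      exact ⟨x, monof _ _ pre _ _ hx, y, monog _ _ pre _ _ hy, rfl⟩
    · intro k n v hv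
      rw [mem_natPairSeq] at hv ⊢
      obtain ⟨x, hx, y, hy, rfl⟩ := hv
      exact ⟨x, soundf _ _ _ hx, y, soundg _ _ _ hy, rfl⟩
    · intro n v hv
      rw [mem_natPairSeq] at hv
      obtain ⟨x, hx, y, hy, rfl⟩ := hv
      obtain ⟨k1, hk1⟩ := complf _ _ hx
      obtain ⟨k2, hk2⟩ := complg _ _ hy
      refine ⟨max k1 k2, ?_⟩
      rw [mem_natPairSeq]
      exact ⟨x, monof _ _ (OPref_prefix O (le_max_left k1 k2)) _ _ hk1,
        y, monog _ _ (OPref_prefix O (le_max_right k1 k2)) _ _ hk2, rfl⟩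
  | comp hf' hg' ihf ihg =>
    obtain ⟨Gf, pf, monof, soundf, complf⟩ := ihf
    obtain ⟨Gg, pg, monog, soundg, complg⟩ := ihg
    refine ⟨fun p => Gg p >>= fun m => Gf (Nat.pair p.unpair.1 m), ?_, ?_, ?_, ?_⟩
    · apply Partrec.nat_iff.1
      exact (Partrec.nat_iff.2 pg).bind
        (((Partrec.nat_iff.2 pf).comp
          ((Primrec₂.natPair.comp (pu1.comp Primrec.fst) Primrec.snd).to_comp)).to₂)
    · intro σ σ' pre n v hv
      simp only [Part.bind_eq_bind, Part.mem_bind_iff, Nat.unpair_pair] at hv ⊢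
      obtain ⟨m, hm, hv⟩ := hv
      exact ⟨m, monog _ _ pre _ _ hm, monof _ _ pre _ _ hv⟩
    · intro k n v hv
      simp only [Part.bind_eq_bind, Part.mem_bind_iff, Nat.unpair_pair, mem_pfun_bind] at hv ⊢
      obtain ⟨m, hm, hv⟩ := hv
      exact ⟨m, soundg _ _ _ hm, soundf _ _ _ hv⟩
    · intro n v hv
      simp only [Part.bind_eq_bind, Part.mem_bind_iff, mem_pfun_bind] at hv
      obtain ⟨m, hm, hv⟩ := hv
      obtain ⟨k1, hk1⟩ := complg _ _ hm
      obtain ⟨k2, hk2⟩ := complf _ _ hv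
      refine ⟨max k1 k2, ?_⟩
      simp only [Part.bind_eq_bind, Part.mem_bind_iff, Nat.unpair_pair]
      exact ⟨m, monog _ _ (OPref_prefix O (le_max_left k1 k2)) _ _ hk1,
        monof _ _ (OPref_prefix O (le_max_right k1 k2)) _ _ hk2⟩
  | prec hf' hg' ihf ihg =>
    obtain ⟨Gf, pf, monof, soundf, complf⟩ := ihf
    obtain ⟨Gg, pg, monog, soundg, complg⟩ := ihg
    have rear1 : Primrec fun q : ℕ =>
        Nat.pair q.unpair.1.unpair.1 (Nat.pair q.unpair.1.unpair.2 q.unpair.2) :=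
      Primrec₂.natPair.comp (pu1.comp pu1) (Primrec₂.natPair.comp (pu2.comp pu1) pu2)
    have hG' : Nat.Partrec fun q =>
        Gg (Nat.pair q.unpair.1.unpair.1 (Nat.pair q.unpair.1.unpair.2 q.unpair.2)) :=
      Partrec.nat_iff.1 ((Partrec.nat_iff.2 pg).comp rear1.to_comp)
    have hP := Nat.Partrec.prec pf hG'
    have rear2 : Primrec fun p : ℕ =>
        Nat.pair (Nat.pair p.unpair.1 p.unpair.2.unpair.1) p.unpair.2.unpair.2 :=
      Primrec₂.natPair.comp (Primrec₂.natPair.comp pu1 (pu1.comp pu2)) (pu2.comp pu2)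
    have hGp : Nat.Partrec fun p : ℕ =>
        (Nat.rec (Gf (Nat.pair p.unpair.1 p.unpair.2.unpair.1))
          (fun y IH => IH.bind fun i =>
            Gg (Nat.pair p.unpair.1 (Nat.pair p.unpair.2.unpair.1 (Nat.pair y i))))
          p.unpair.2.unpair.2 : Part ℕ) := by
      apply (Partrec.nat_iff.1 ((Partrec.nat_iff.2 hP).comp rear2.to_comp)).of_eq
      intro p
      simp [Nat.unpaired, Part.bind_eq_bind]
    have mono : ∀ (σ σ' : List ℕ), σ <+: σ' → ∀ x M v,
        v ∈ (Nat.rec (Gf (Nat.pair (encode σ) x))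
          (fun y IH => IH.bind fun i =>
            Gg (Nat.pair (encode σ) (Nat.pair x (Nat.pair y i)))) M : Part ℕ) →
        v ∈ (Nat.rec (Gf (Nat.pair (encode σ') x))
          (fun y IH => IH.bind fun i =>
            Gg (Nat.pair (encode σ') (Nat.pair x (Nat.pair y i)))) M : Part ℕ) := by
      intro σ σ' pre x M
      induction M with
      | zero => intro v hv; exact monof _ _ pre _ _ hv
      | succ m ih =>
        intro v hv
        simp only [Nat.rec_add_one] at hv ⊢
        rw [Part.mem_bind_iff] at hv ⊢
        obtain ⟨i, hi, hv⟩ := hv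
        exact ⟨i, ih _ hi, monog _ _ pre _ _ hv⟩
    refine ⟨_, hGp, ?_, ?_, ?_⟩
    · intro σ σ' pre n v hv
      simp only [Nat.unpair_pair] at hv ⊢
      exact mono σ σ' pre n.unpair.1 n.unpair.2 v hv
    · intro k n v hv
      simp only [Nat.unpair_pair] at hv
      simp only [Nat.unpaired]
      generalize n.unpair.1 = x at hv ⊢
      generalize n.unpair.2 = M at hv ⊢
      induction M generalizing v with
      | zero => exact soundf _ _ _ hv
      | succ m ih =>
        simp only [Nat.rec_add_one] at hv ⊢
        rw [Part.mem_bind_iff] at hv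
        obtain ⟨i, hi, hv⟩ := hv
        rw [Part.bind_eq_bind, Part.mem_bind_iff]
        exact ⟨i, ih _ hi, soundg _ _ _ hv⟩
    · intro n v hv
      simp only [Nat.unpaired] at hv
      simp only [Nat.unpair_pair]
      generalize n.unpair.1 = x at hv ⊢
      generalize n.unpair.2 = M at hv ⊢
      induction M generalizing v with
      | zero => exact complf _ _ hv
      | succ m ih =>
        simp only [Nat.rec_add_one, Part.bind_eq_bind] at hv
        rw [Part.mem_bind_iff] at hv
        obtain ⟨i, hi, hv⟩ := hv
        obtain ⟨k1, hk1⟩ := ih _ hi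
        obtain ⟨k2, hk2⟩ := complg _ _ hv
        refine ⟨max k1 k2, ?_⟩
        simp only [Nat.rec_add_one]
        rw [Part.mem_bind_iff]
        exact ⟨i, mono _ _ (OPref_prefix O (le_max_left k1 k2)) _ _ _ hk1,
          monog _ _ (OPref_prefix O (le_max_right k1 k2)) _ _ hk2⟩
  | @rfind f' hf' ihf =>
    obtain ⟨Gf, pf, monof, soundf, complf⟩ := ihf
    have rear1 : Primrec fun q : ℕ =>
        Nat.pair q.unpair.1.unpair.1 (Nat.pair q.unpair.1.unpair.2 q.unpair.2) :=
      Primrec₂.natPair.comp (pu1.comp pu1) (Primrec₂.natPair.comp (pu2.comp pu1) pu2)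
    have hF' : Nat.Partrec fun q =>
        Gf (Nat.pair q.unpair.1.unpair.1 (Nat.pair q.unpair.1.unpair.2 q.unpair.2)) :=
      Partrec.nat_iff.1 ((Partrec.nat_iff.2 pf).comp rear1.to_comp)
    have hGp : Nat.Partrec fun p : ℕ =>
        Nat.rfind fun n => (fun m => m = 0) <$> Gf (Nat.pair p.unpair.1 (Nat.pair p.unpair.2 n)) := by
      apply (Nat.Partrec.rfind hF').of_eq
      intro p
      simp [Nat.unpair_pair]
    refine ⟨_, hGp, ?_, ?_, ?_⟩
    · intro σ σ' pre n v hv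
      simp only [Nat.unpair_pair] at hv ⊢
      replace hv := Nat.mem_rfind.1 hv; refine Nat.mem_rfind.2 ?_
      obtain ⟨h1, h2⟩ := hv
      constructor
      · simp only [Part.map_eq_map, Part.mem_map_iff] at h1 ⊢
        obtain ⟨u, hu, e⟩ := h1
        exact ⟨u, monof _ _ pre _ _ hu, e⟩
      · intro m hm
        have h3 := h2 hm
        simp only [Part.map_eq_map, Part.mem_map_iff] at h3 ⊢
        obtain ⟨u, hu, e⟩ := h3
        exact ⟨u, monof _ _ pre _ _ hu, e⟩
    · intro k n v hv
      simp only [Nat.unpair_pair] at hv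
      replace hv := Nat.mem_rfind.1 hv; refine Nat.mem_rfind.2 ?_
      obtain ⟨h1, h2⟩ := hv
      constructor
      · simp only [Part.map_eq_map, Part.mem_map_iff] at h1 ⊢
        obtain ⟨u, hu, e⟩ := h1
        exact ⟨u, soundf _ _ _ hu, e⟩
      · intro m hm
        have h3 := h2 hm
        simp only [Part.map_eq_map, Part.mem_map_iff] at h3 ⊢
        obtain ⟨u, hu, e⟩ := h3
        exact ⟨u, soundf _ _ _ hu, e⟩
    · intro n v hv
      replace hv := Nat.mem_rfind.1 hv
      obtain ⟨h1, h2⟩ := hv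
      have H : ∀ m : ℕ, ∃ k : ℕ, m ≤ v →
          ∃ u, u ∈ Gf (Nat.pair (encode (OPref O k)) (Nat.pair n m)) ∧ u ∈ f' (Nat.pair n m) := by
        intro m
        rcases lt_trichotomy m v with hm | hm | hm
        · have h3 := h2 hm
          simp only [Part.map_eq_map, Part.mem_map_iff] at h3
          obtain ⟨u, hu, e⟩ := h3
          obtain ⟨k, hk⟩ := complf _ _ hu
          exact ⟨k, fun _ => ⟨u, hk, hu⟩⟩
        · subst hm
          simp only [Part.map_eq_map, Part.mem_map_iff] at h1
          obtain ⟨u, hu, e⟩ := h1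
          obtain ⟨k, hk⟩ := complf _ _ hu
          exact ⟨k, fun _ => ⟨u, hk, hu⟩⟩
        · exact ⟨0, fun h => absurd h (not_le.2 hm)⟩
      choose K hK using H
      refine ⟨(Finset.range (v + 1)).sup K, ?_⟩
      simp only [Nat.unpair_pair]
      refine Nat.mem_rfind.2 ?_
      have hle : ∀ m, m ≤ v → K m ≤ (Finset.range (v + 1)).sup K := fun m hm =>
        Finset.le_sup (Finset.mem_range.2 (Nat.lt_succ_of_le hm))
      constructor
      · obtain ⟨u, hu, hu2⟩ := hK v le_rfl
        simp only [Part.map_eq_map, Part.mem_map_iff] at h1 ⊢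
        obtain ⟨u0, hu0, e0⟩ := h1
        refine ⟨u, monof _ _ (OPref_prefix O (hle v le_rfl)) _ _ hu, ?_⟩
        rwa [Part.mem_unique hu2 hu0]
      · intro m hm
        obtain ⟨u, hu, hu2⟩ := hK m hm.le
        have h3 := h2 hm
        simp only [Part.map_eq_map, Part.mem_map_iff] at h3 ⊢
        obtain ⟨u0, hu0, e0⟩ := h3
        refine ⟨u, monof _ _ (OPref_prefix O (hle m hm.le)) _ _ hu, ?_⟩
        rwa [Part.mem_unique hu2 hu0]

theorem RecIn.natIter {O : ℕ → ℕ} {stp : ℕ → ℕ} (hstp : RecIn O ↑stp) (b : ℕ) :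
    RecIn O ↑(fun k : ℕ => Nat.rec (motive := fun _ => ℕ) b (fun y IH => stp (Nat.pair y IH)) k) := by
  have pu2 : Primrec fun p : ℕ => p.unpair.2 := Primrec.snd.comp Primrec.unpair
  have h1 : RecIn O ↑(fun q : ℕ => stp q.unpair.2) :=
    RecIn.totalComp' hstp (RecIn.of_computable pu2.to_comp)
  have h2 := RecIn.totalPrec (RecIn.of_computable (Computable.const b)) h1
  have h3 : RecIn O ↑(fun n : ℕ => Nat.pair 0 n) :=
    RecIn.of_computable (Primrec₂.natPair.comp (Primrec.const 0) Primrec.id).to_comp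
  apply (RecIn.totalComp' h2 h3).of_eq
  intro k
  simp [Nat.unpair_pair]

theorem natrec_eq {b : ℕ} {s : ℕ → ℕ} {g : ℕ → ℕ} (h0 : g 0 = b)
    (hstep : ∀ m, g (m + 1) = s (Nat.pair m (g m))) :
    ∀ k, (Nat.rec (motive := fun _ => ℕ) b (fun y IH => s (Nat.pair y IH)) k) = g k := by
  intro k
  induction k with
  | zero => exact h0.symm
  | succ m ih =>
    show s (Nat.pair m (Nat.rec (motive := fun _ => ℕ) b (fun y IH => s (Nat.pair y IH)) m)) = g (m + 1)
    rw [ih, hstep]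

open Encodable in
theorem RecIn.prefFn (O : ℕ → ℕ) : RecIn O ↑(fun k => encode (OPref O k)) := by
  have pu1 : Primrec fun p : ℕ => p.unpair.1 := Primrec.fst.comp Primrec.unpair
  have pu2 : Primrec fun p : ℕ => p.unpair.2 := Primrec.snd.comp Primrec.unpair
  have hF : Computable fun r : ℕ =>
      encode (((decode (α := List ℕ) r.unpair.2).getD []) ++ [r.unpair.1]) := by
    have h1 : Primrec fun r : ℕ => (decode (α := List ℕ) r.unpair.2).getD [] :=
      Primrec.option_getD.comp (Primrec.decode.comp pu2) (Primrec.const [])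
    have h2 : Primrec fun r : ℕ => [r.unpair.1] :=
      Primrec.list_cons.comp pu1 (Primrec.const [])
    exact (Primrec.encode.comp (Primrec.list_append.comp h1 h2)).to_comp
  have hstp : RecIn O ↑(fun q : ℕ =>
      encode (((decode (α := List ℕ) q.unpair.2).getD []) ++ [O q.unpair.1])) := by
    have ho : RecIn O ↑(fun q : ℕ => O q.unpair.1) :=
      RecIn.totalComp' RecIn.oracle (RecIn.of_computable pu1.to_comp)
    have hpair : RecIn O ↑(fun q : ℕ => Nat.pair (O q.unpair.1) q.unpair.2) :=
      RecIn.totalPair ho (RecIn.of_computable pu2.to_comp)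
    apply (RecIn.totalComp' (RecIn.of_computable hF) hpair).of_eq
    intro q
    simp [Nat.unpair_pair]
  apply ((RecIn.natIter hstp (encode ([] : List ℕ)))).of_eq
  intro k
  simp only [PFun.coe_val, Part.some_inj]
  apply natrec_eq (s := fun q : ℕ =>
      encode (((decode (α := List ℕ) q.unpair.2).getD []) ++ [O q.unpair.1]))
    (g := fun k => encode (OPref O k))
  · simp [OPref]
  · intro m
    simp [Nat.unpair_pair, Encodable.encodek, OPref, List.range_succ]

theorem RecIn.rfind_total {O : ℕ → ℕ} {t : ℕ → ℕ} (ht : RecIn O ↑t)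
    (h : ∀ x, ∃ n, t (Nat.pair x n) = 0) :
    RecIn O ↑(fun x => Nat.find (h x)) := by
  apply (RecIn.rfind ht).of_eq
  intro x
  rw [PFun.coe_val, Part.eq_some_iff]; refine Nat.mem_rfind.2 ?_
  constructor
  · simp only [Part.map_eq_map, PFun.coe_val, Part.map_some, Part.mem_some_iff]
    simp [Nat.find_spec (h x)]
  · intro m hm
    simp only [Part.map_eq_map, PFun.coe_val, Part.map_some, Part.mem_some_iff]
    simp [Nat.find_min (h x) hm]


set_option maxHeartbeats 2000000 in
open Encodable Nat.Partrec.Code in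
theorem not_Sdark_implies_reduction (R S : ℕ → ℕ → Prop)
    (hR : Equivalence R) (hS : Equivalence S)
    (hRinf : InfClasses R) (hSinf : InfClasses S)
    (h : ∃ A : Set ℕ, A.Infinite ∧ CeIn (chi S) A ∧
      ∀ x ∈ A, ∀ y ∈ A, x ≠ y → ¬ R x y) :
    ∃ f : ℕ → ℕ, RecIn (chi S) (f : ℕ →. ℕ) ∧ ∀ x y, S x y ↔ R (f x) (f y) := by
  classical
  obtain ⟨A, hAinf, ⟨g, hgRec, hgDom⟩, htr⟩ := h
  set O := chi S with hO
  have pu1 : Primrec fun p : ℕ => p.unpair.1 := Primrec.fst.comp Primrec.unpair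
  have pu2 : Primrec fun p : ℕ => p.unpair.2 := Primrec.snd.comp Primrec.unpair
  obtain ⟨G, pG, monoG, soundG, complG⟩ := hgRec.exists_approx
  obtain ⟨c, hc⟩ := Nat.Partrec.Code.exists_code.1 pG
  -- the search test: q = pair x n, n = pair m w, w = pair k s
  set t : ℕ → ℕ := fun q =>
    if q.unpair.1 ≤ q.unpair.2.unpair.1 ∧
        (evaln q.unpair.2.unpair.2.unpair.2 c
          (Nat.pair (encode (OPref O q.unpair.2.unpair.2.unpair.1)) q.unpair.2.unpair.1)).isSome
          = true
    then 0 else 1 with htdef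
  have htRec : RecIn O ↑t := by
    have hF2 : Computable fun r : ℕ =>
        (if r.unpair.1.unpair.1 ≤ r.unpair.1.unpair.2.unpair.1 ∧
            (evaln r.unpair.1.unpair.2.unpair.2.unpair.2 c
              (Nat.pair r.unpair.2 r.unpair.1.unpair.2.unpair.1)).isSome = true
         then 0 else 1 : ℕ) := by
      apply Primrec.to_comp
      have he : Primrec fun r : ℕ =>
          evaln r.unpair.1.unpair.2.unpair.2.unpair.2 c
            (Nat.pair r.unpair.2 r.unpair.1.unpair.2.unpair.1) := by
        have harg : Primrec fun r : ℕ =>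
            ((r.unpair.1.unpair.2.unpair.2.unpair.2, c),
              Nat.pair r.unpair.2 r.unpair.1.unpair.2.unpair.1) :=
          ((pu2.comp (pu2.comp (pu2.comp pu1))).pair (Primrec.const c)).pair
            (Primrec₂.natPair.comp pu2 (pu1.comp (pu2.comp pu1)))
        exact Nat.Partrec.Code.primrec_evaln.comp harg
      have hcond : PrimrecPred fun r : ℕ =>
          r.unpair.1.unpair.1 ≤ r.unpair.1.unpair.2.unpair.1 ∧
            (evaln r.unpair.1.unpair.2.unpair.2.unpair.2 c
              (Nat.pair r.unpair.2 r.unpair.1.unpair.2.unpair.1)).isSome = true :=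
        PrimrecPred.and
          (Primrec.nat_le.comp (pu1.comp pu1) (pu1.comp (pu2.comp pu1)))
          (Primrec.eq.comp (Primrec.option_isSome.comp he) (Primrec.const true))
      exact Primrec.ite hcond (Primrec.const 0) (Primrec.const 1)
    have hinner : RecIn O ↑(fun q : ℕ =>
        Nat.pair q (encode (OPref O q.unpair.2.unpair.2.unpair.1))) :=
      RecIn.totalPair (RecIn.of_computable Computable.id)
        (RecIn.totalComp' (RecIn.prefFn O)
          (RecIn.of_computable (pu1.comp (pu2.comp pu2)).to_comp))
    apply (RecIn.totalComp' (RecIn.of_computable hF2) hinner).of_eq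
    intro q
    simp only [PFun.coe_val, Part.some_inj, Nat.unpair_pair, htdef]
  have tzero : ∀ q, t q = 0 ↔ (q.unpair.1 ≤ q.unpair.2.unpair.1 ∧
      (evaln q.unpair.2.unpair.2.unpair.2 c
        (Nat.pair (encode (OPref O q.unpair.2.unpair.2.unpair.1)) q.unpair.2.unpair.1)).isSome
        = true) := by
    intro q
    simp only [htdef]
    split_ifs with hcond
    · simp [hcond]
    · simp [hcond]
  have hsem : ∀ m : ℕ, m ∈ A ↔ ∃ w : ℕ,
      (evaln w.unpair.2 c (Nat.pair (encode (OPref O w.unpair.1)) m)).isSome = true := by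
    intro m
    constructor
    · intro hm
      have hdom : (g m).Dom := (hgDom m).1 hm
      obtain ⟨v, hv⟩ := Part.dom_iff_mem.1 hdom
      obtain ⟨k, hk⟩ := complG m v hv
      rw [← hc] at hk
      obtain ⟨s', hs'⟩ := evaln_complete.1 hk
      refine ⟨Nat.pair k s', ?_⟩
      simp only [Nat.unpair_pair]
      exact Option.isSome_iff_exists.2 ⟨v, hs'⟩
    · rintro ⟨w, hw⟩
      obtain ⟨v, hv⟩ := Option.isSome_iff_exists.1 hw
      have hmem : v ∈ eval c (Nat.pair (encode (OPref O w.unpair.1)) m) :=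
        evaln_sound (show v ∈ evaln w.unpair.2 c _ from hv)
      rw [hc] at hmem
      exact (hgDom m).2 (Part.dom_iff_mem.2 ⟨v, soundG _ _ _ hmem⟩)
  have hsearch : ∀ x, ∃ n, t (Nat.pair x n) = 0 := by
    intro x
    obtain ⟨m, hmA, hxm⟩ := hAinf.exists_gt x
    obtain ⟨w, hw⟩ := (hsem m).1 hmA
    refine ⟨Nat.pair m w, ?_⟩
    rw [tzero]
    simp only [Nat.unpair_pair]
    exact ⟨hxm.le, hw⟩
  set hfn : ℕ → ℕ := fun x => (Nat.find (hsearch x)).unpair.1 with hfndef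
  have hfnRec : RecIn O ↑hfn :=
    RecIn.totalComp' (RecIn.of_computable pu1.to_comp) (RecIn.rfind_total htRec hsearch)
  have hfnA : ∀ x, hfn x ∈ A := by
    intro x
    have hspec := (tzero _).1 (Nat.find_spec (hsearch x))
    simp only [Nat.unpair_pair] at hspec
    exact (hsem _).2 ⟨(Nat.find (hsearch x)).unpair.2, hspec.2⟩
  have hfnGe : ∀ x, x ≤ hfn x := by
    intro x
    have hspec := (tzero _).1 (Nat.find_spec (hsearch x))
    simp only [Nat.unpair_pair] at hspec
    exact hspec.1
  set bfn : ℕ → ℕ := fun i =>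
    Nat.rec (motive := fun _ => ℕ) (hfn 0) (fun _ IH => hfn (IH + 1)) i with hbdef
  have bfnRec : RecIn O ↑bfn := by
    have hstp : RecIn O ↑(fun q : ℕ => hfn (q.unpair.2 + 1)) :=
      RecIn.totalComp' hfnRec (RecIn.of_computable (Primrec.succ.comp pu2).to_comp)
    apply (RecIn.natIter hstp (hfn 0)).of_eq
    intro k
    simp only [PFun.coe_val, Part.some_inj]
    apply natrec_eq (s := fun q : ℕ => hfn (q.unpair.2 + 1)) (g := bfn)
    · rfl
    · intro m
      simp only [hbdef, Nat.unpair_pair]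
  have bfnA : ∀ i, bfn i ∈ A := by
    intro i
    induction i with
    | zero => exact hfnA 0
    | succ m _ => exact hfnA _
  have bfnMono : StrictMono bfn :=
    strictMono_nat_of_lt_succ fun n =>
      lt_of_lt_of_le (Nat.lt_succ_self _) (hfnGe (bfn n + 1))
  -- minimal representative of the S-class
  set t2 : ℕ → ℕ := fun q => if S q.unpair.2 q.unpair.1 then 0 else 1 with ht2def
  have t2Rec : RecIn O ↑t2 := by
    have hsw : Computable fun q : ℕ => Nat.pair q.unpair.2 q.unpair.1 :=
      (Primrec₂.natPair.comp pu2 pu1).to_comp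
    have hoc : RecIn O ↑(fun q : ℕ => O (Nat.pair q.unpair.2 q.unpair.1)) :=
      RecIn.totalComp' RecIn.oracle (RecIn.of_computable hsw)
    have hsub : Computable fun v : ℕ => 1 - v :=
      (Primrec.nat_sub.comp (Primrec.const 1) Primrec.id).to_comp
    apply (RecIn.totalComp' (RecIn.of_computable hsub) hoc).of_eq
    intro q
    simp only [PFun.coe_val, Part.some_inj, hO, chi, Nat.unpair_pair, ht2def]
    split_ifs <;> rfl
  have t2zero : ∀ q, t2 q = 0 ↔ S q.unpair.2 q.unpair.1 := by
    intro q
    simp only [ht2def]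
    split_ifs with hcond
    · simp [hcond]
    · simp [hcond]
  have hS2 : ∀ x, ∃ n, t2 (Nat.pair x n) = 0 := by
    intro x
    refine ⟨x, ?_⟩
    rw [ht2def]
    simp [Nat.unpair_pair, hS.refl x]
  set mfn : ℕ → ℕ := fun x => Nat.find (hS2 x) with hmdef
  have mfnRec : RecIn O ↑mfn := RecIn.rfind_total t2Rec hS2
  have mfnS : ∀ x, S (mfn x) x := by
    intro x
    have hspec := (t2zero _).1 (Nat.find_spec (hS2 x))
    simp only [Nat.unpair_pair] at hspec
    exact hspec
  have mfnMin : ∀ x y, S y x → mfn x ≤ y := by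
    intro x y hy
    by_contra hn
    have hmin := Nat.find_min (hS2 x) (not_le.1 hn)
    exact hmin ((t2zero _).2 (by simpa [Nat.unpair_pair] using hy))
  have mfnEq : ∀ x y, S x y ↔ mfn x = mfn y := by
    intro x y
    constructor
    · intro hxy
      exact le_antisymm
        (mfnMin x (mfn y) (hS.trans (mfnS y) (hS.symm hxy)))
        (mfnMin y (mfn x) (hS.trans (mfnS x) hxy))
    · intro he
      have h1 := mfnS x
      rw [he] at h1
      exact hS.trans (hS.symm h1) (mfnS y)
  refine ⟨fun x => bfn (mfn x), RecIn.totalComp' bfnRec mfnRec, ?_⟩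
  intro x y
  constructor
  · intro hxy
    show R (bfn (mfn x)) (bfn (mfn y))
    rw [(mfnEq x y).1 hxy]
    exact hR.refl _
  · intro hr
    by_contra hn
    have hne : mfn x ≠ mfn y := fun e => hn ((mfnEq x y).2 e)
    exact htr _ (bfnA (mfn x)) _ (bfnA (mfn y)) (fun e => hne (bfnMono.injective e)) hr
end

section
/- Let R, S be equivalence relations with infinitely many classes. If there is an S-computable reduction of S to R (i.e., S ≤_{deg_T(S)} R), then R is not S-dark: R has an infinite S-c.e. transversal. -/
section Aux
variable {O : ℕ → ℕ}

theorem recIn_of_partrec {g : ℕ →. ℕ} (h : Nat.Partrec g) : RecIn O g := by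
  induction h with
  | zero => exact RecIn.zero
  | succ => exact RecIn.succ
  | left => exact RecIn.left
  | right => exact RecIn.right
  | pair _ _ hf hg => exact RecIn.pair hf hg
  | comp _ _ hf hg => exact RecIn.comp hf hg
  | prec _ _ hf hg => exact RecIn.prec hf hg
  | rfind _ hf => exact RecIn.rfind hf

theorem recIn_of_computable {g : ℕ → ℕ} (h : Computable g) : RecIn O (g : ℕ →. ℕ) :=
  recIn_of_partrec (Partrec.nat_iff.1 h)

theorem RecIn.of_eq_s16 {g h : ℕ →. ℕ} (hg : RecIn O g) (H : ∀ n, g n = h n) : RecIn O h :=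
  (funext H : g = h) ▸ hg

theorem recIn_totalComp {g h : ℕ → ℕ} (hg : RecIn O (g : ℕ →. ℕ))
    (hh : RecIn O (h : ℕ →. ℕ)) : RecIn O ((fun n => g (h n) : ℕ → ℕ) : ℕ →. ℕ) :=
  (RecIn.comp hg hh).of_eq_s16 fun n => by exact Part.bind_some (h n) (g : ℕ →. ℕ)

theorem recIn_totalPair {g h : ℕ → ℕ} (hg : RecIn O (g : ℕ →. ℕ))
    (hh : RecIn O (h : ℕ →. ℕ)) :
    RecIn O ((fun n => Nat.pair (g n) (h n) : ℕ → ℕ) : ℕ →. ℕ) :=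
  (RecIn.pair hg hh).of_eq_s16 fun n => by simp [PFun.coe_val, Seq.seq]

/-- `natC O (Nat.pair z n) = 1` iff `O (Nat.pair z w) = 0` for all `w < n`. -/
def natC (O : ℕ → ℕ) : ℕ → ℕ :=
  Nat.unpaired fun z n =>
    Nat.rec 1 (fun y IH => if O (Nat.pair z y) = 0 then IH else 0) n

theorem recIn_natC : RecIn O ((natC O : ℕ → ℕ) : ℕ →. ℕ) := by
  have hq : Computable (fun m : ℕ => Nat.pair m.unpair.1 m.unpair.2.unpair.1) := by
    apply Primrec.to_comp
    exact Primrec₂.natPair.comp (Primrec.fst.comp Primrec.unpair)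
      (Primrec.fst.comp (Primrec.unpair.comp (Primrec.snd.comp Primrec.unpair)))
  have hr : Computable (fun m : ℕ => m.unpair.2.unpair.2) := by
    apply Primrec.to_comp
    exact Primrec.snd.comp (Primrec.unpair.comp (Primrec.snd.comp Primrec.unpair))
  have hstep : Computable (fun p : ℕ => if p.unpair.1 = 0 then p.unpair.2 else 0) := by
    apply Primrec.to_comp
    exact Primrec.ite
      (PrimrecRel.comp Primrec.eq (Primrec.fst.comp Primrec.unpair) (Primrec.const 0))
      (Primrec.snd.comp Primrec.unpair) (Primrec.const 0)
  -- the oracle step function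
  have hgstep : RecIn O ((fun m : ℕ =>
      if O (Nat.pair m.unpair.1 m.unpair.2.unpair.1) = 0 then m.unpair.2.unpair.2 else 0 :
      ℕ → ℕ) : ℕ →. ℕ) := by
    have h1 : RecIn O ((fun m : ℕ => O (Nat.pair m.unpair.1 m.unpair.2.unpair.1) : ℕ → ℕ) :
        ℕ →. ℕ) := recIn_totalComp RecIn.oracle (recIn_of_computable hq)
    have h2 := recIn_totalPair h1 (recIn_of_computable hr)
    have h3 := recIn_totalComp (recIn_of_computable hstep) h2
    exact h3.of_eq_s16 fun m => by simp
  have hone : RecIn O ((fun _ : ℕ => 1 : ℕ → ℕ) : ℕ →. ℕ) :=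
    recIn_of_computable (Computable.const 1)
  refine (RecIn.prec hone hgstep).of_eq_s16 fun m => ?_
  simp only [PFun.coe_val, Nat.unpaired, natC]
  induction m.unpair.2 with
  | zero => rfl
  | succ n ih =>
      simp only [Nat.unpair_pair, Part.bind_eq_bind] at ih ⊢
      rw [ih, Part.bind_some]

theorem natC_eq_one (z n : ℕ) :
    natC O (Nat.pair z n) = 1 ↔ ∀ w < n, O (Nat.pair z w) = 0 := by
  induction n with
  | zero => simp [natC]
  | succ n ih =>
      simp only [natC, Nat.unpaired, Nat.unpair_pair] at ih ⊢
      constructor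
      · intro h
        by_cases hO : O (Nat.pair z n) = 0
        · rw [if_pos hO] at h
          intro w hw
          rcases Nat.lt_succ_iff_lt_or_eq.1 hw with hw | rfl
          · exact ih.1 h w hw
          · exact hO
        · rw [if_neg hO] at h; exact absurd h (by norm_num)
      · intro h
        rw [if_pos (h n (Nat.lt_succ_self n))]
        exact ih.2 fun w hw => h w (hw.trans (Nat.lt_succ_self n))

end Aux

theorem reduction_implies_not_Sdark (R S : ℕ → ℕ → Prop)
    (hR : Equivalence R) (hS : Equivalence S)
    (hRinf : InfClasses R) (hSinf : InfClasses S)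
    (f : ℕ → ℕ) (hf : RecIn (chi S) (f : ℕ →. ℕ))
    (hred : ∀ x y, S x y ↔ R (f x) (f y)) :
    ∃ A : Set ℕ, A.Infinite ∧ CeIn (chi S) A ∧
      ∀ x ∈ A, ∀ y ∈ A, x ≠ y → ¬ R x y := by
  classical
  set O := chi S with hO
  -- the set of minimal representatives of S-classes
  set T : Set ℕ := {z | ∀ w < z, ¬ S z w} with hT
  have hOzero : ∀ z w, O (Nat.pair z w) = 0 ↔ ¬ S z w := by
    intro z w
    simp only [hO, chi, Nat.unpair_pair]
    by_cases h : S z w <;> simp [h]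
  -- T is infinite
  have hTmem : ∀ n : ℕ, ∃ m ∈ T, S n m := by
    intro n
    have hne : ∃ w, S n w := ⟨n, hS.refl n⟩
    refine ⟨Nat.find hne, ?_, Nat.find_spec hne⟩
    intro w hw hSw
    exact Nat.find_min hne hw (hS.trans (Nat.find_spec hne) hSw)
  have hTinf : T.Infinite := by
    intro hfin
    obtain ⟨z, hz⟩ := hSinf hfin.toFinset
    obtain ⟨m, hm, hSm⟩ := hTmem z
    exact hz m (hfin.mem_toFinset.2 hm) hSm
  -- f is injective on T
  have hinj : Set.InjOn f T := by
    intro z hz w hw hfe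
    by_contra hne
    have hRz : R (f z) (f w) := hfe ▸ hR.refl (f z)
    have hSzw : S z w := (hred z w).2 hRz
    rcases lt_or_gt_of_ne hne with h | h
    · exact hw z h (hS.symm hSzw)
    · exact hz w h hSzw
  refine ⟨f '' T, hTinf.image hinj, ?_, ?_⟩
  · -- c.e. in S
    -- the decision function for the rfind search
    set F : ℕ → ℕ := fun p =>
      if natC O (Nat.pair p.unpair.2 p.unpair.2) = 1 ∧ f p.unpair.2 = p.unpair.1
      then 0 else 1 with hF
    have hFrec : RecIn O ((F : ℕ → ℕ) : ℕ →. ℕ) := by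
      have hdiag : Computable (fun p : ℕ => Nat.pair p.unpair.2 p.unpair.2) := by
        apply Primrec.to_comp
        exact Primrec₂.natPair.comp (Primrec.snd.comp Primrec.unpair)
          (Primrec.snd.comp Primrec.unpair)
      have hsnd : Computable (fun p : ℕ => p.unpair.2) :=
        Primrec.to_comp (Primrec.snd.comp Primrec.unpair)
      have hfst : Computable (fun p : ℕ => p.unpair.1) :=
        Primrec.to_comp (Primrec.fst.comp Primrec.unpair)
      have hG : Computable (fun q : ℕ =>
          if q.unpair.1 = 1 ∧ q.unpair.2.unpair.1 = q.unpair.2.unpair.2 then 0 else 1) := by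
        apply Primrec.to_comp
        refine Primrec.ite ?_ (Primrec.const 0) (Primrec.const 1)
        exact PrimrecPred.and
          (PrimrecRel.comp Primrec.eq (Primrec.fst.comp Primrec.unpair) (Primrec.const 1))
          (PrimrecRel.comp Primrec.eq
            (Primrec.fst.comp (Primrec.unpair.comp (Primrec.snd.comp Primrec.unpair)))
            (Primrec.snd.comp (Primrec.unpair.comp (Primrec.snd.comp Primrec.unpair))))
      have h1 : RecIn O ((fun p : ℕ => natC O (Nat.pair p.unpair.2 p.unpair.2) : ℕ → ℕ) :
          ℕ →. ℕ) := recIn_totalComp recIn_natC (recIn_of_computable hdiag)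
      have h2 : RecIn O ((fun p : ℕ => f p.unpair.2 : ℕ → ℕ) : ℕ →. ℕ) :=
        recIn_totalComp hf (recIn_of_computable hsnd)
      have h3 := recIn_totalPair h2 (recIn_of_computable hfst)
      have h4 := recIn_totalPair h1 h3
      have h5 := recIn_totalComp (recIn_of_computable hG) h4
      exact h5.of_eq_s16 fun p => by simp [hF]
    have hrfind := RecIn.rfind hFrec
    refine ⟨_, hrfind, ?_⟩
    intro n
    have hdom : (Nat.rfind fun k => (fun m => m = 0) <$> (F : ℕ →. ℕ) (Nat.pair n k)).Dom ↔
        ∃ k, F (Nat.pair n k) = 0 := by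
      refine Nat.rfind_dom.trans ?_
      constructor
      · rintro ⟨k, hk, -⟩
        refine ⟨k, ?_⟩
        simpa [PFun.coe_val] using hk
      · rintro ⟨k, hk⟩
        exact ⟨k, by simpa [PFun.coe_val] using hk, fun {m} _ => by simp [PFun.coe_val]⟩
    have hFzero : ∀ n k, F (Nat.pair n k) = 0 ↔ (∀ w < k, ¬ S k w) ∧ f k = n := by
      intro n k
      have hiff : (natC O (Nat.pair k k) = 1 ∧ f k = n) ↔
          ((∀ w < k, ¬ S k w) ∧ f k = n) := by
        rw [natC_eq_one]
        constructor
        · rintro ⟨h1, h2⟩; exact ⟨fun w hw => (hOzero k w).1 (h1 w hw), h2⟩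
        · rintro ⟨h1, h2⟩; exact ⟨fun w hw => (hOzero k w).2 (h1 w hw), h2⟩
      simp only [hF, Nat.unpair_pair]
      rw [← hiff]
      split_ifs with h
      · simpa using h
      · simpa using h
    rw [hdom]
    constructor
    · rintro ⟨z, hz, rfl⟩
      exact ⟨z, (hFzero (f z) z).2 ⟨hz, rfl⟩⟩
    · rintro ⟨k, hk⟩
      obtain ⟨h1, h2⟩ := (hFzero n k).1 hk
      exact ⟨k, h1, h2⟩
  · -- transversal
    rintro x ⟨z, hz, rfl⟩ y ⟨w, hw, rfl⟩ hne hRzw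
    have hSzw : S z w := (hred z w).2 hRzw
    rcases lt_trichotomy z w with h | h | h
    · exact hw z h (hS.symm hSzw)
    · exact hne (congrArg f h)
    · exact hz w h hSzw
end

section
/- There is an equivalence relation R that is a 2-c.e. (d.c.e.) relation, not computably enumerable, such that Id ≤_c R via a computable function whose range intersects every R-equivalence class. (Hence the Inversion Lemma fails outside ceers.) Concretely, fixing a noncomputable c.e. set X and a computable partition of ℕ into {a_i}, {b_i}, {c_i}, {d_i}, let R have classes {a_i, c_i}, {b_i, d_i} when i ∉ X and classes {a_i, d_i}, {b_i, c_i} when i ∈ X; then R is d.c.e., not c.e., Id ≤_c R via i-even/odd ↦ a_i or b_i, this reduction hits all classes, yet R ≰_c Id. -/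
open Nat.Partrec (Code)
open Nat.Partrec.Code

namespace InvAux

/-- the halting set, as a predicate on ℕ -/
def X : ℕ → Prop := fun n => (eval (Denumerable.ofNat Code n) 0).Dom

lemma X_re : REPred X :=
  Partrec.comp (ComputablePred.halting_problem_re 0) (Computable.ofNat Code)

lemma X_not_comp : ¬ ComputablePred X := by
  intro h
  apply ComputablePred.halting_problem 0
  obtain ⟨inst, hc⟩ := h
  refine ComputablePred.of_eq (p := fun c : Code => X (Encodable.encode c))
    ⟨fun c => inst _, hc.comp Computable.encode⟩ ?_
  intro c
  simp [X]

noncomputable def color (n : ℕ) : ℕ :=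
  @ite _ (X (n / 4)) (Classical.propDecidable _)
    (if n % 4 = 0 ∨ n % 4 = 3 then 0 else 1) (n % 4 % 2)

noncomputable def g (n : ℕ) : ℕ := 2 * (n / 4) + color n

lemma color_le (n : ℕ) : color n ≤ 1 := by
  unfold color; split_ifs <;> omega

lemma g_eq_iff (n m : ℕ) : g n = g m ↔ n / 4 = m / 4 ∧ color n = color m := by
  have h1 := color_le n; have h2 := color_le m
  unfold g; omega

lemma re_shape {C D : ℕ × ℕ → Prop}
    (hC : ComputablePred C) (hD : ComputablePred D)
    {h : ℕ × ℕ → ℕ} (hh : Computable h) :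
    REPred fun a => C a ∨ (D a ∧ X (h a)) := by
  obtain ⟨instC, hC⟩ := hC
  obtain ⟨instD, hD⟩ := hD
  have base : Partrec fun a => bif decide (C a) then Part.some () else
      bif decide (D a) then Part.assert (X (h a)) fun _ => Part.some () else Part.none :=
    Partrec.cond hC (Decidable.Partrec.const' (Part.some ()))
      (Partrec.cond hD (Partrec.comp X_re hh) Partrec.none)
  refine base.of_eq fun a => Part.ext fun u => ?_
  by_cases hc : C a <;> by_cases hd : D a <;>
    simp [hc, hd, Part.mem_assert_iff]

def Cp (n m : ℕ) : Prop :=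
  n / 4 = m / 4 ∧ (n % 4 = m % 4 ∨
    (n % 4 ≠ m % 4 ∧ (n % 4 + m % 4 = 2 ∨ n % 4 + m % 4 = 4)))

instance (n m : ℕ) : Decidable (Cp n m) := by unfold Cp; infer_instance

def Dp (n m : ℕ) : Prop := n / 4 = m / 4 ∧ n % 4 + m % 4 = 3

instance (n m : ℕ) : Decidable (Dp n m) := by unfold Dp; infer_instance

def Bp (n m : ℕ) : Prop :=
  n / 4 = m / 4 ∧ n % 4 ≠ m % 4 ∧ (n % 4 + m % 4 = 2 ∨ n % 4 + m % 4 = 4)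

instance (n m : ℕ) : Decidable (Bp n m) := by unfold Bp; infer_instance

lemma main_iff (n m : ℕ) : g n = g m ↔
    (Cp n m ∨ (Dp n m ∧ X (n / 4))) ∧ ¬ (False ∨ (Bp n m ∧ X (n / 4))) := by
  rw [g_eq_iff]
  unfold Cp Dp Bp color
  by_cases hX : X (n / 4) <;> by_cases hX' : X (m / 4)
  · simp only [if_pos hX, if_pos hX', hX, and_true, false_or]
    split_ifs with h1 h2 h3 <;> (try simp) <;> omega
  · have hne : n / 4 ≠ m / 4 := fun h => hX' (h ▸ hX)
    simp only [if_pos hX, if_neg hX', hX, and_true, false_or]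
    split_ifs with h1 h2 h3 <;> (try simp) <;> omega
  · have hne : n / 4 ≠ m / 4 := fun h => hX (h ▸ hX')
    simp only [if_neg hX, if_pos hX', hX, and_false, or_false, false_or]
    split_ifs with h1 h2 h3 <;> (try simp) <;> omega
  · simp only [if_neg hX, if_neg hX', hX, and_false, or_false, false_or]
    (try simp) <;> omega

lemma ab3 (i : ℕ) : (g (4 * i) = g (4 * i + 3)) ↔ X i := by
  have e1 : (4 * i) / 4 = i := by omega
  have e2 : (4 * i + 3) / 4 = i := by omega
  rw [g_eq_iff]
  unfold color
  rw [e1, e2]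
  by_cases hX : X i <;> simp [hX] <;> first | (split_ifs with h1 h2 h3 <;> (try simp) <;> omega) | omega

lemma ab2 (i : ℕ) : (g (4 * i) = g (4 * i + 2)) ↔ ¬ X i := by
  have e1 : (4 * i) / 4 = i := by omega
  have e2 : (4 * i + 2) / 4 = i := by omega
  rw [g_eq_iff]
  unfold color
  rw [e1, e2]
  by_cases hX : X i <;> simp [hX] <;> first | (split_ifs with h1 h2 h3 <;> (try simp) <;> omega) | omega

/-- the reduction from `Id`: even `x = 2i ↦ a_i = 4i`, odd `x = 2i+1 ↦ b_i = 4i+1`. -/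
def f (x : ℕ) : ℕ := 2 * x - x % 2

lemma gf (x : ℕ) : g (f x) = x := by
  unfold g color f
  by_cases hX : X ((2 * x - x % 2) / 4) <;> simp [hX] <;>
    first | (split_ifs with h1 h2 h3 <;> (try simp) <;> omega) | omega

-- primrec building blocks
lemma prim_div4_fst : Primrec fun p : ℕ × ℕ => p.1 / 4 :=
  Primrec.nat_div.comp .fst (.const 4)
lemma prim_div4_snd : Primrec fun p : ℕ × ℕ => p.2 / 4 :=
  Primrec.nat_div.comp .snd (.const 4)
lemma prim_mod4_fst : Primrec fun p : ℕ × ℕ => p.1 % 4 :=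
  Primrec.nat_mod.comp .fst (.const 4)
lemma prim_mod4_snd : Primrec fun p : ℕ × ℕ => p.2 % 4 :=
  Primrec.nat_mod.comp .snd (.const 4)
lemma prim_sum : Primrec fun p : ℕ × ℕ => p.1 % 4 + p.2 % 4 :=
  Primrec.nat_add.comp prim_mod4_fst prim_mod4_snd

lemma Cp_comp : ComputablePred fun p : ℕ × ℕ => Cp p.1 p.2 := by
  have h : PrimrecPred fun p : ℕ × ℕ => Cp p.1 p.2 :=
    (PrimrecRel.comp Primrec.eq prim_div4_fst prim_div4_snd).and
      (((PrimrecRel.comp Primrec.eq prim_mod4_fst prim_mod4_snd)).or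
        (((PrimrecRel.comp Primrec.eq prim_mod4_fst prim_mod4_snd).not).and
          ((PrimrecRel.comp Primrec.eq prim_sum (Primrec.const 2)).or
            (PrimrecRel.comp Primrec.eq prim_sum (Primrec.const 4)))))
  exact h.computablePred

lemma Dp_comp : ComputablePred fun p : ℕ × ℕ => Dp p.1 p.2 := by
  have h : PrimrecPred fun p : ℕ × ℕ => Dp p.1 p.2 :=
    (PrimrecRel.comp Primrec.eq prim_div4_fst prim_div4_snd).and
      (PrimrecRel.comp Primrec.eq prim_sum (Primrec.const 3))
  exact h.computablePred

lemma Bp_comp : ComputablePred fun p : ℕ × ℕ => Bp p.1 p.2 := by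
  have h : PrimrecPred fun p : ℕ × ℕ => Bp p.1 p.2 :=
    (PrimrecRel.comp Primrec.eq prim_div4_fst prim_div4_snd).and
      (((PrimrecRel.comp Primrec.eq prim_mod4_fst prim_mod4_snd).not).and
        ((PrimrecRel.comp Primrec.eq prim_sum (Primrec.const 2)).or
          (PrimrecRel.comp Primrec.eq prim_sum (Primrec.const 4))))
  exact h.computablePred

lemma false_comp : ComputablePred fun _ : ℕ × ℕ => False :=
  ⟨fun _ => inferInstanceAs (Decidable False), by
    simpa using (Computable.const false)⟩

lemma comp_div4 : Computable fun p : ℕ × ℕ => p.1 / 4 := prim_div4_fst.to_comp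

lemma comp_f : Computable f :=
  (Primrec.nat_sub.comp (Primrec.nat_mul.comp (.const 2) .id)
    (Primrec.nat_mod.comp .id (.const 2))).to_comp

lemma comp_pair2 : Computable fun i : ℕ => ((4 * i, 4 * i + 2) : ℕ × ℕ) :=
  ((Primrec.nat_mul.comp (.const 4) .id).pair
    (Primrec.nat_add.comp (Primrec.nat_mul.comp (.const 4) .id) (.const 2))).to_comp

end InvAux

theorem inversion_fails_for_dce :
    ∃ R : ℕ → ℕ → Prop, Equivalence R ∧
      (∃ A B : ℕ × ℕ → Prop, REPred A ∧ REPred B ∧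
        ∀ p : ℕ × ℕ, R p.1 p.2 ↔ A p ∧ ¬ B p) ∧
      ¬ REPred (fun p : ℕ × ℕ => R p.1 p.2) ∧
      (∃ f : ℕ → ℕ, Computable f ∧ (∀ x y, x = y ↔ R (f x) (f y)) ∧
        ∀ y, ∃ x, R (f x) y) ∧
      ¬ CRed R Eq := by
  classical
  refine ⟨fun n m => InvAux.g n = InvAux.g m,
    ⟨fun _ => rfl, fun h => h.symm, fun h1 h2 => h1.trans h2⟩, ?_, ?_, ?_, ?_⟩
  · -- d.c.e. decomposition
    refine ⟨fun p => InvAux.Cp p.1 p.2 ∨ (InvAux.Dp p.1 p.2 ∧ InvAux.X (p.1 / 4)),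
      fun p => False ∨ (InvAux.Bp p.1 p.2 ∧ InvAux.X (p.1 / 4)), ?_, ?_, ?_⟩
    · exact InvAux.re_shape InvAux.Cp_comp InvAux.Dp_comp InvAux.comp_div4
    · exact InvAux.re_shape InvAux.false_comp InvAux.Bp_comp InvAux.comp_div4
    · intro p
      exact InvAux.main_iff p.1 p.2
  · -- not c.e.
    intro hRe
    have h2 : REPred fun i : ℕ => ¬ InvAux.X i := by
      have h1 : REPred fun i : ℕ => InvAux.g (4 * i) = InvAux.g (4 * i + 2) :=
        Partrec.comp hRe InvAux.comp_pair2
      exact h1.of_eq fun i => InvAux.ab2 i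
    exact InvAux.X_not_comp (ComputablePred.computable_iff_re_compl_re'.2 ⟨InvAux.X_re, h2⟩)
  · -- reduction from Id hitting all classes
    refine ⟨InvAux.f, InvAux.comp_f, ?_, ?_⟩
    · intro x y
      show x = y ↔ InvAux.g (InvAux.f x) = InvAux.g (InvAux.f y)
      rw [InvAux.gf, InvAux.gf]
    · intro y
      exact ⟨InvAux.g y, InvAux.gf (InvAux.g y)⟩
  · -- no reduction to Id
    rintro ⟨h, hc, hiff⟩
    apply InvAux.X_not_comp
    have hcomp : Computable fun i : ℕ => decide (h (4 * i) = h (4 * i + 3)) :=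
      (PrimrecRel.decide (R := (@Eq ℕ)) Primrec.eq).to_comp.comp
        (hc.comp ((Primrec.nat_mul.comp (.const 4) .id).to_comp))
        (hc.comp ((Primrec.nat_add.comp (Primrec.nat_mul.comp (.const 4) .id)
          (.const 3)).to_comp))
    refine ComputablePred.of_eq ⟨inferInstance, hcomp⟩ ?_
    intro i
    rw [← hiff]
    exact (InvAux.ab3 i)
end
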